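/- arXiv:1803.09959 — 5 statements merged into one kernel-verified Lean document; each statement's English description precedes it below -/
import Mathlib

section
/- Let (A, Γ, G, δ) be a G-graded algebra that is graded-simple (A² ≠ 0 and A has no proper nonzero graded ideals). Then the centroid C(A) is itself G-graded: C(A) = ⊕_{g∈G} C(A)_g, where C(A)_g = {c ∈ C(A) : c·A_{g'} ⊆ A_{gg'} for all g' ∈ G}. -/
/-! Generic framework: nonassociative algebras are modules `B` over a field `F`
equipped with an explicit multiplication `mul : B → B → B`. -/

/-- `mul` is `F`-bilinear. -/
def IsBilinearMul (F : Type*) {B : Type*} [Field F] [AddCommGroup B] [Module F B]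
    (mul : B → B → B) : Prop :=
  (∀ x y z : B, mul (x + y) z = mul x z + mul y z) ∧
  (∀ x y z : B, mul x (y + z) = mul x y + mul x z) ∧
  (∀ (c : F) (x y : B), mul (c • x) y = c • mul x y) ∧
  (∀ (c : F) (x y : B), mul x (c • y) = c • mul x y)

/-- The product of the subspaces `U` and `V` is contained in `W`. -/
def SubMulLE {F B : Type*} [Field F] [AddCommGroup B] [Module F B]
    (mul : B → B → B) (U V W : Submodule F B) : Prop :=
  ∀ u ∈ U, ∀ v ∈ V, mul u v ∈ W

/-- The product of the subspaces `U` and `V` is nonzero. -/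
def SubMulNonzero {F B : Type*} [Field F] [AddCommGroup B] [Module F B]
    (mul : B → B → B) (U V : Submodule F B) : Prop :=
  ∃ u ∈ U, ∃ v ∈ V, mul u v ≠ 0

/-- A grading of the subalgebra `S` of `(B, mul)`: a set `Γ` of nonzero subspaces of `S`
whose (direct) sum is `S`, closed under multiplication. -/
structure IsGradingOn {F B : Type*} [Field F] [AddCommGroup B] [Module F B]
    (mul : B → B → B) (S : Submodule F B) (Γ : Set (Submodule F B)) : Prop where
  ne_bot : ∀ U ∈ Γ, U ≠ ⊥
  le : ∀ U ∈ Γ, U ≤ S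
  indep : sSupIndep Γ
  total : sSup Γ = S
  mul_closed : ∀ U ∈ Γ, ∀ V ∈ Γ, ∃ W ∈ Γ, SubMulLE mul U V W

/-- A grading on the whole algebra `(B, mul)`. -/
def IsGrading {F B : Type*} [Field F] [AddCommGroup B] [Module F B]
    (mul : B → B → B) (Γ : Set (Submodule F B)) : Prop :=
  IsGradingOn mul ⊤ Γ

/-- A degree map `δ : Γ → G` compatible with the grading relations:
`δ U + δ V = δ W` whenever `0 ≠ U·V ⊆ W`. -/
def IsCompatMap {F B : Type*} [Field F] [AddCommGroup B] [Module F B]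
    (mul : B → B → B) (Γ : Set (Submodule F B))
    (G : Type*) [AddCommGroup G] (δ : Submodule F B → G) : Prop :=
  ∀ U ∈ Γ, ∀ V ∈ Γ, ∀ W ∈ Γ,
    SubMulNonzero mul U V → SubMulLE mul U V W → δ U + δ V = δ W

/-- `(G, δ)` is the universal group of the grading `Γ`: `δ` is compatible and every compatible
degree map factors through `δ` via a unique group homomorphism. -/
structure IsUniversalGroup {F B : Type*} [Field F] [AddCommGroup B] [Module F B]
    (mul : B → B → B) (Γ : Set (Submodule F B))
    (G : Type) [AddCommGroup G] (δ : Submodule F B → G) : Prop where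
  compat : IsCompatMap mul Γ G δ
  universal : ∀ (H : Type) (instH : AddCommGroup H) (δ' : Submodule F B → H),
    IsCompatMap mul Γ H δ' → ∃! φ : G →+ H, ∀ U ∈ Γ, φ (δ U) = δ' U

/-- `Γ` is a group-grading: it can be realized by an injective compatible degree map into an
abelian group. -/
def IsGroupGrading {F B : Type*} [Field F] [AddCommGroup B] [Module F B]
    (mul : B → B → B) (Γ : Set (Submodule F B)) : Prop :=
  ∃ (G : Type) (instG : AddCommGroup G) (δ : Submodule F B → G),
    Set.InjOn δ Γ ∧ @IsCompatMap F B _ _ _ mul Γ G instG δ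

/-- `Γ''` refines `Γ`: every component of `Γ''` is contained in a component of `Γ`. -/
def GradRefines {F B : Type*} [Field F] [AddCommGroup B] [Module F B]
    (Γ'' Γ : Set (Submodule F B)) : Prop :=
  ∀ U ∈ Γ'', ∃ W ∈ Γ, U ≤ W

/-- `Γ` is a fine grading of `S`: it admits no proper refinement. -/
def IsFineGradingOn {F B : Type*} [Field F] [AddCommGroup B] [Module F B]
    (mul : B → B → B) (S : Submodule F B) (Γ : Set (Submodule F B)) : Prop :=
  IsGradingOn mul S Γ ∧
    ∀ Γ'' : Set (Submodule F B), IsGradingOn mul S Γ'' → GradRefines Γ'' Γ → Γ'' = Γ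

/-- `Γ` is a fine group-grading of `S`: it admits no proper refinement among group-gradings. -/
def IsFineGroupGradingOn {F B : Type*} [Field F] [AddCommGroup B] [Module F B]
    (mul : B → B → B) (S : Submodule F B) (Γ : Set (Submodule F B)) : Prop :=
  IsGradingOn mul S Γ ∧ IsGroupGrading mul Γ ∧
    ∀ Γ'' : Set (Submodule F B), IsGradingOn mul S Γ'' → IsGroupGrading mul Γ'' →
      GradRefines Γ'' Γ → Γ'' = Γ

/-- `I` is a (two-sided) ideal of the subalgebra `S` of `(B, mul)`. -/
def IsIdealIn {F B : Type*} [Field F] [AddCommGroup B] [Module F B]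
    (mul : B → B → B) (S I : Submodule F B) : Prop :=
  I ≤ S ∧ ∀ x ∈ I, ∀ a ∈ S, mul a x ∈ I ∧ mul x a ∈ I

/-- The subalgebra `J` of `(B, mul)` is a simple algebra: its product is nonzero and it has no
proper nonzero ideals. -/
def IsSimpleAlgOn {F B : Type*} [Field F] [AddCommGroup B] [Module F B]
    (mul : B → B → B) (J : Submodule F B) : Prop :=
  (∃ x ∈ J, ∃ y ∈ J, mul x y ≠ 0) ∧
    ∀ I : Submodule F B, IsIdealIn mul J I → I = ⊥ ∨ I = J

/-- The subalgebra `S` of `(B, mul)` is semisimple: a finite direct sum of simple ideals. -/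
def IsSemisimpleOn {F B : Type*} [Field F] [AddCommGroup B] [Module F B]
    (mul : B → B → B) (S : Submodule F B) : Prop :=
  ∃ (n : ℕ) (J : Fin n → Submodule F B), iSupIndep J ∧ (⨆ i, J i) = S ∧
    ∀ i, IsIdealIn mul S (J i) ∧ IsSimpleAlgOn mul (J i)

/-- `I` is a graded submodule with respect to the grading family `𝒜`. -/
def IsGradedSubmoduleFam {F B G : Type*} [Field F] [AddCommGroup B] [Module F B]
    (𝒜 : G → Submodule F B) (I : Submodule F B) : Prop :=
  I = ⨆ g, I ⊓ 𝒜 g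

/-- `I` is a graded submodule with respect to the set-grading `Γ`. -/
def IsGradedSubmoduleSet {F B : Type*} [Field F] [AddCommGroup B] [Module F B]
    (Γ : Set (Submodule F B)) (I : Submodule F B) : Prop :=
  I = ⨆ U ∈ Γ, I ⊓ U

/-- The algebra `(B, mul)` with the `G`-grading `𝒜` is graded-simple: `B·B ≠ 0` and there are
no proper nonzero graded ideals. -/
def IsGradedSimpleFam {F B G : Type*} [Field F] [AddCommGroup B] [Module F B]
    (mul : B → B → B) (𝒜 : G → Submodule F B) : Prop :=
  (∃ a b : B, mul a b ≠ 0) ∧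
    ∀ I : Submodule F B, IsIdealIn mul ⊤ I → IsGradedSubmoduleFam 𝒜 I → I = ⊥ ∨ I = ⊤

/-- The centroid of `(B, mul)`, as a set of `F`-linear endomorphisms. -/
def centroidSet {F B : Type*} [Field F] [AddCommGroup B] [Module F B]
    (mul : B → B → B) : Set (Module.End F B) :=
  {c | ∀ a b : B, c (mul a b) = mul (c a) b ∧ c (mul a b) = mul a (c b)}

/-- The centroid of `(B, mul)`, as a submodule of `End_F(B)` (needs bilinearity of `mul`). -/
def centroid {F B : Type*} [Field F] [AddCommGroup B] [Module F B]
    (mul : B → B → B) (hbil : IsBilinearMul F mul) : Submodule F (Module.End F B) where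
  carrier := centroidSet mul
  add_mem' := by
    rintro c d hc hd
    intro a b
    obtain ⟨hc1, hc2⟩ := hc a b
    obtain ⟨hd1, hd2⟩ := hd a b
    constructor
    · rw [LinearMap.add_apply, hc1, hd1, LinearMap.add_apply, hbil.1]
    · rw [LinearMap.add_apply, hc2, hd2, LinearMap.add_apply, hbil.2.1]
  zero_mem' := by
    intro a b
    have h0 : ∀ y : B, mul 0 y = 0 := fun y => by
      have := hbil.2.2.1 0 0 y; simpa using this
    have h0' : ∀ y : B, mul y 0 = 0 := fun y => by
      have := hbil.2.2.2 0 y 0; simpa using this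
    simp [h0, h0']
  smul_mem' := by
    rintro r c hc a b
    obtain ⟨hc1, hc2⟩ := hc a b
    constructor
    · rw [LinearMap.smul_apply, hc1, LinearMap.smul_apply, hbil.2.2.1]
    · rw [LinearMap.smul_apply, hc2, LinearMap.smul_apply, hbil.2.2.2]

/-- Endomorphisms shifting degrees by `g` with respect to the grading family `𝒜`. -/
def endDegree {F B G : Type*} [Field F] [AddCommGroup B] [Module F B] [AddCommGroup G]
    (𝒜 : G → Submodule F B) (g : G) : Submodule F (Module.End F B) where
  carrier := {c | ∀ g' : G, ∀ x ∈ 𝒜 g', c x ∈ 𝒜 (g + g')}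
  add_mem' := fun hc hd g' x hx => by
    simpa [LinearMap.add_apply] using add_mem (hc g' x hx) (hd g' x hx)
  zero_mem' := fun g' x hx => by simpa using zero_mem _
  smul_mem' := fun r c hc g' x hx => by
    simpa [LinearMap.smul_apply] using Submodule.smul_mem _ r (hc g' x hx)

/-- The homogeneous component of degree `g` of the centroid. -/
def centroidComponent {F B G : Type*} [Field F] [AddCommGroup B] [Module F B] [AddCommGroup G]
    (mul : B → B → B) (hbil : IsBilinearMul F mul)
    (𝒜 : G → Submodule F B) (g : G) : Submodule F (Module.End F B) :=
  centroid mul hbil ⊓ endDegree 𝒜 g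

/-! Loop algebras. We realize the loop algebra inside `G →₀ A` (the `A`-span of the group
algebra `F G`, with `x ⊗ g` corresponding to `Finsupp.single g x`), with the convolution
product. -/

/-- Convolution product on `G →₀ A` induced by `mul`; under `x ⊗ g ↦ single g x` this is the
multiplication of `A ⊗ F[G]`. -/
noncomputable def convMul {A : Type*} {G : Type*} [AddCommGroup A]
    [AddCommGroup G] (mul : A → A → A) (f g : G →₀ A) : G →₀ A :=
  f.sum fun a x => g.sum fun b y => Finsupp.single (a + b) (mul x y)

/-- The loop algebra `L_π(A) = ⊕_g A_{π(g)} ⊗ g` as a submodule of `G →₀ A`. -/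
def loopSubmodule {F A : Type*} {G Gb : Type*} [Field F] [AddCommGroup A] [Module F A]
    [AddCommGroup G] [AddCommGroup Gb] (π : G →+ Gb) (𝒜 : Gb → Submodule F A) :
    Submodule F (G →₀ A) where
  carrier := {f | ∀ g : G, f g ∈ 𝒜 (π g)}
  add_mem' := fun hf hg g => by simpa [Finsupp.add_apply] using add_mem (hf g) (hg g)
  zero_mem' := fun g => by simp
  smul_mem' := fun r f hf g => by
    simpa [Finsupp.smul_apply] using Submodule.smul_mem _ r (hf g)

/-- The multiplication of the loop algebra. -/
noncomputable def loopMul {F A : Type*} {G Gb : Type*} [Field F] [AddCommGroup A] [Module F A]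
    [AddCommGroup G] [AddCommGroup Gb] (mul : A → A → A) (π : G →+ Gb)
    (𝒜 : Gb → Submodule F A)
    (hgmul : ∀ g h : Gb, ∀ x ∈ 𝒜 g, ∀ y ∈ 𝒜 h, mul x y ∈ 𝒜 (g + h))
    (f g : ↥(loopSubmodule π 𝒜)) : ↥(loopSubmodule π 𝒜) :=
  ⟨convMul mul f.1 g.1, by
    intro k
    classical
    simp only [convMul, Finsupp.sum_apply]
    refine Submodule.finsuppSum_mem _ _ _ _ fun a _ => ?_
    refine Submodule.finsuppSum_mem _ _ _ _ fun b _ => ?_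
    simp only [Finsupp.single_apply]
    split_ifs with h
    · have hk : π k = π a + π b := by rw [← h, map_add]
      rw [hk]
      exact hgmul _ _ _ (f.2 a) _ (g.2 b)
    · exact zero_mem _⟩

/-- The homogeneous component of degree `g` of the loop algebra. -/
noncomputable def loopComponent {F A : Type*} {G Gb : Type*} [Field F] [AddCommGroup A] [Module F A]
    [AddCommGroup G] [AddCommGroup Gb] (π : G →+ Gb) (𝒜 : Gb → Submodule F A) (g : G) :
    Submodule F ↥(loopSubmodule π 𝒜) :=
  Submodule.comap (loopSubmodule π 𝒜).subtype ((𝒜 (π g)).map (Finsupp.lsingle g))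

/-- The set of homogeneous components of the `G`-grading of the loop algebra, as submodules of
the ambient `G →₀ A`. -/
def loopGradingSet {F A : Type*} {G Gb : Type*} [Field F] [AddCommGroup A] [Module F A]
    [AddCommGroup G] [AddCommGroup Gb] (π : G →+ Gb) (𝒜 : Gb → Submodule F A) :
    Set (Submodule F (G →₀ A)) :=
  {S | ∃ g : G, 𝒜 (π g) ≠ ⊥ ∧ S = (𝒜 (π g)).map (Finsupp.lsingle g)}

/-- The set of homogeneous components of the grading family `𝒜`. -/
def famGradingSet {F A Gb : Type*} [Field F] [AddCommGroup A] [Module F A]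
    (𝒜 : Gb → Submodule F A) : Set (Submodule F A) :=
  {S | ∃ gb : Gb, 𝒜 gb ≠ ⊥ ∧ S = 𝒜 gb}



section CentroidGraded

variable {F B : Type*} [Field F] [AddCommGroup B] [Module F B]
    {G : Type*} [AddCommGroup G] [DecidableEq G]

/-- The inverse of the decomposition equivalence of an internal direct sum. -/
noncomputable def gEquiv (𝒜 : G → Submodule F B) (hint : DirectSum.IsInternal 𝒜) :
    DirectSum G (fun g => ↥(𝒜 g)) ≃ₗ[F] B :=
  LinearEquiv.ofBijective (DirectSum.coeLinearMap 𝒜) hint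

/-- Projection onto the `k`-th homogeneous component, as an endomorphism of `B`. -/
noncomputable def gproj (𝒜 : G → Submodule F B) (hint : DirectSum.IsInternal 𝒜) (k : G) :
    B →ₗ[F] B :=
  (𝒜 k).subtype ∘ₗ (DirectSum.component F G (fun g => ↥(𝒜 g)) k) ∘ₗ
    (gEquiv 𝒜 hint).symm.toLinearMap

theorem gproj_apply (𝒜 : G → Submodule F B) (hint : DirectSum.IsInternal 𝒜) (k : G) (x : B) :
    gproj 𝒜 hint k x = ((gEquiv 𝒜 hint).symm x k : B) := rfl

theorem gproj_mem (𝒜 : G → Submodule F B) (hint : DirectSum.IsInternal 𝒜) (k : G) (x : B) :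
    gproj 𝒜 hint k x ∈ 𝒜 k := ((gEquiv 𝒜 hint).symm x k).2

theorem gproj_of_mem_same (𝒜 : G → Submodule F B) (hint : DirectSum.IsInternal 𝒜) {k : G}
    {x : B} (hx : x ∈ 𝒜 k) : gproj 𝒜 hint k x = x := by
  rw [gproj_apply]
  exact congrArg Subtype.val (hint.ofBijective_coeLinearMap_of_mem hx)

theorem gproj_of_mem_ne (𝒜 : G → Submodule F B) (hint : DirectSum.IsInternal 𝒜) {k h : G}
    {x : B} (hx : x ∈ 𝒜 h) (hne : h ≠ k) : gproj 𝒜 hint k x = 0 := by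
  rw [gproj_apply]
  exact congrArg Subtype.val (hint.ofBijective_coeLinearMap_of_mem_ne hne hx)

theorem gproj_spec (𝒜 : G → Submodule F B) (hint : DirectSum.IsInternal 𝒜) (x : B) :
    ∃ s : Finset G, (∀ k ∉ s, gproj 𝒜 hint k x = 0) ∧ x = ∑ k ∈ s, gproj 𝒜 hint k x := by
  classical
  set v := (gEquiv 𝒜 hint).symm x with hv
  refine ⟨v.support, fun k hk => ?_, ?_⟩
  · rw [gproj_apply, ← hv, DFinsupp.notMem_support_iff.mp hk, Submodule.coe_zero]
  · have hsum : (∑ k ∈ v.support, DirectSum.of (fun g => ↥(𝒜 g)) k (v k)) = v :=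
      DirectSum.sum_support_of v
    have h2 : (∑ k ∈ v.support, gEquiv 𝒜 hint (DirectSum.of (fun g => ↥(𝒜 g)) k (v k))) = x := by
      rw [← LinearEquiv.coe_coe, ← map_sum, LinearEquiv.coe_coe, hsum, hv,
        LinearEquiv.apply_symm_apply]
    refine h2.symm.trans (Finset.sum_congr rfl fun k _ => ?_)
    have h3 : gEquiv 𝒜 hint (DirectSum.of (fun g => ↥(𝒜 g)) k (v k)) = (v k : B) :=
      DirectSum.coeLinearMap_of 𝒜 k (v k)
    rw [h3, gproj_apply, hv]

/-- Induction over homogeneous elements. -/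
theorem homog_induction (𝒜 : G → Submodule F B) (hint : DirectSum.IsInternal 𝒜)
    {p : B → Prop} (h0 : p 0) (hadd : ∀ x y, p x → p y → p (x + y))
    (hh : ∀ k, ∀ x ∈ 𝒜 k, p x) (x : B) : p x := by
  obtain ⟨s, -, hx⟩ := gproj_spec 𝒜 hint x
  rw [hx]
  exact Finset.sum_induction _ _ hadd h0 fun k _ => hh k _ (gproj_mem 𝒜 hint k x)

theorem ext_homog (𝒜 : G → Submodule F B) (hint : DirectSum.IsInternal 𝒜)
    {f g : B →ₗ[F] B} (h : ∀ k, ∀ x ∈ 𝒜 k, f x = g x) : f = g := by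
  ext x
  refine homog_induction 𝒜 hint (by simp) (fun a b ha hb => ?_) h x
  simp [map_add, ha, hb]

theorem sum_gproj_of_support_subset (𝒜 : G → Submodule F B) (hint : DirectSum.IsInternal 𝒜)
    {x : B} {t : Finset G} (h0 : ∀ k ∉ t, gproj 𝒜 hint k x = 0) :
    x = ∑ k ∈ t, gproj 𝒜 hint k x := by
  classical
  obtain ⟨s, hs, hx⟩ := gproj_spec 𝒜 hint x
  have h1 : (∑ k ∈ s, gproj 𝒜 hint k x) = ∑ k ∈ s ∪ t, gproj 𝒜 hint k x :=
    Finset.sum_subset Finset.subset_union_left fun k _ hk => hs k hk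
  have h2 : (∑ k ∈ t, gproj 𝒜 hint k x) = ∑ k ∈ s ∪ t, gproj 𝒜 hint k x :=
    Finset.sum_subset Finset.subset_union_right fun k _ hk => h0 k hk
  exact hx.trans (h1.trans h2.symm)

section Mul
variable (mul : B → B → B)

theorem mul_zero' (hbil : IsBilinearMul F mul) (a : B) : mul a 0 = 0 := by
  have := hbil.2.2.2 0 a 0; simpa using this

theorem zero_mul' (hbil : IsBilinearMul F mul) (a : B) : mul 0 a = 0 := by
  have := hbil.2.2.1 0 0 a; simpa using this

variable (hbil : IsBilinearMul F mul)
    (𝒜 : G → Submodule F B) (hint : DirectSum.IsInternal 𝒜)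
    (hgmul : ∀ g h : G, ∀ x ∈ 𝒜 g, ∀ y ∈ 𝒜 h, mul x y ∈ 𝒜 (g + h))

include hbil hgmul

theorem gproj_mul_right {j : G} {b : B} (hb : b ∈ 𝒜 j) (k : G) (y : B) :
    gproj 𝒜 hint (k + j) (mul y b) = mul (gproj 𝒜 hint k y) b := by
  refine homog_induction 𝒜 hint
    (p := fun y => gproj 𝒜 hint (k + j) (mul y b) = mul (gproj 𝒜 hint k y) b)
    ?_ (fun u v hu hv => ?_) (fun m z hy => ?_) y
  · rw [zero_mul' mul hbil, map_zero, map_zero, zero_mul' mul hbil]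
  · rw [hbil.1, map_add, map_add, hu, hv, hbil.1]
  · rcases eq_or_ne m k with rfl | hne
    · rw [gproj_of_mem_same 𝒜 hint hy, gproj_of_mem_same 𝒜 hint (hgmul _ _ _ hy _ hb)]
    · rw [gproj_of_mem_ne 𝒜 hint hy hne,
        gproj_of_mem_ne 𝒜 hint (hgmul _ _ _ hy _ hb) (fun h => hne (add_right_cancel h)),
        zero_mul' mul hbil]

theorem gproj_mul_left {j : G} {b : B} (hb : b ∈ 𝒜 j) (k : G) (y : B) :
    gproj 𝒜 hint (j + k) (mul b y) = mul b (gproj 𝒜 hint k y) := by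
  refine homog_induction 𝒜 hint
    (p := fun y => gproj 𝒜 hint (j + k) (mul b y) = mul b (gproj 𝒜 hint k y))
    ?_ (fun u v hu hv => ?_) (fun m z hy => ?_) y
  · rw [mul_zero' mul hbil, map_zero, map_zero, mul_zero' mul hbil]
  · rw [hbil.2.1, map_add, map_add, hu, hv, hbil.2.1]
  · rcases eq_or_ne m k with rfl | hne
    · rw [gproj_of_mem_same 𝒜 hint hy, gproj_of_mem_same 𝒜 hint (hgmul _ _ _ hb _ hy)]
    · rw [gproj_of_mem_ne 𝒜 hint hy hne,
        gproj_of_mem_ne 𝒜 hint (hgmul _ _ _ hb _ hy) (fun h => hne (add_left_cancel h)),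
        mul_zero' mul hbil]

end Mul

/-- The `g`-homogeneous component of an endomorphism. -/
noncomputable def endComp (𝒜 : G → Submodule F B) (hint : DirectSum.IsInternal 𝒜)
    (c : Module.End F B) (g : G) : Module.End F B :=
  (DirectSum.toModule F G B (fun h => gproj 𝒜 hint (g + h) ∘ₗ c ∘ₗ (𝒜 h).subtype)) ∘ₗ
    (gEquiv 𝒜 hint).symm.toLinearMap

theorem endComp_apply_of_mem (𝒜 : G → Submodule F B) (hint : DirectSum.IsInternal 𝒜)
    (c : Module.End F B) (g : G) {h : G} {x : B} (hx : x ∈ 𝒜 h) :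
    endComp 𝒜 hint c g x = gproj 𝒜 hint (g + h) (c x) := by
  have hs : (gEquiv 𝒜 hint).symm x = DirectSum.lof F G (fun g => ↥(𝒜 g)) h ⟨x, hx⟩ := by
    apply (gEquiv 𝒜 hint).injective
    rw [LinearEquiv.apply_symm_apply]
    exact (DirectSum.coeLinearMap_of 𝒜 h ⟨x, hx⟩).symm
  show DirectSum.toModule F G B _ ((gEquiv 𝒜 hint).symm x) = _
  rw [hs, DirectSum.toModule_lof]
  rfl

theorem mem_centroid_iff (mul : B → B → B) (hbil : IsBilinearMul F mul) (c : Module.End F B) :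
    c ∈ centroid mul hbil ↔
      ∀ a b : B, c (mul a b) = mul (c a) b ∧ c (mul a b) = mul a (c b) := Iff.rfl

theorem endComp_mem_endDegree (𝒜 : G → Submodule F B) (hint : DirectSum.IsInternal 𝒜)
    (c : Module.End F B) (g : G) : endComp 𝒜 hint c g ∈ endDegree 𝒜 g := by
  intro g' x hx
  rw [endComp_apply_of_mem 𝒜 hint c g hx]
  exact gproj_mem 𝒜 hint _ _

theorem endComp_mem_centroid (mul : B → B → B) (hbil : IsBilinearMul F mul)
    (𝒜 : G → Submodule F B) (hint : DirectSum.IsInternal 𝒜)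
    (hgmul : ∀ g h : G, ∀ x ∈ 𝒜 g, ∀ y ∈ 𝒜 h, mul x y ∈ 𝒜 (g + h))
    {c : Module.End F B} (hc : c ∈ centroid mul hbil) (g : G) :
    endComp 𝒜 hint c g ∈ centroid mul hbil := by
  set d := endComp 𝒜 hint c g with hd
  have key : ∀ a b : B, d (mul a b) = mul (d a) b ∧ d (mul a b) = mul a (d b) := by
    intro a b
    refine homog_induction 𝒜 hint
      (p := fun a => ∀ b : B, d (mul a b) = mul (d a) b ∧ d (mul a b) = mul a (d b))
      ?_ ?_ ?_ a b
    · intro b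
      constructor <;> simp [zero_mul' mul hbil, mul_zero' mul hbil]
    · intro u v hu hv b
      obtain ⟨hu1, hu2⟩ := hu b
      obtain ⟨hv1, hv2⟩ := hv b
      constructor
      · simp only [map_add, hbil.1, hu1, hv1]
      · simp only [map_add, hbil.1, hu2, hv2]
    · intro i a ha b
      refine homog_induction 𝒜 hint
        (p := fun b => d (mul a b) = mul (d a) b ∧ d (mul a b) = mul a (d b)) ?_ ?_ ?_ b
      · constructor <;> simp [zero_mul' mul hbil, mul_zero' mul hbil]
      · intro u v hu hv
        constructor
        · simp only [map_add, hbil.2.1, hu.1, hv.1]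
        · simp only [map_add, hbil.2.1, hu.2, hv.2]
      · intro j b hb
        have hab : mul a b ∈ 𝒜 (i + j) := hgmul _ _ _ ha _ hb
        constructor
        · rw [hd, endComp_apply_of_mem 𝒜 hint c g hab, (hc a b).1,
            endComp_apply_of_mem 𝒜 hint c g ha,
            ← gproj_mul_right mul hbil 𝒜 hint hgmul hb (g + i) (c a), ← add_assoc]
        · rw [hd, endComp_apply_of_mem 𝒜 hint c g hab, (hc a b).2,
            endComp_apply_of_mem 𝒜 hint c g hb,
            ← gproj_mul_left mul hbil 𝒜 hint hgmul ha (g + j) (c b)]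
          have h1 : g + (i + j) = i + (g + j) := by abel
          rw [h1]
  exact key

theorem endComp_support_finite (𝒜 : G → Submodule F B) (hint : DirectSum.IsInternal 𝒜)
    (c : Module.End F B) (x : B) : {g : G | endComp 𝒜 hint c g x ≠ 0}.Finite := by
  refine homog_induction 𝒜 hint
    (p := fun x => {g : G | endComp 𝒜 hint c g x ≠ 0}.Finite) ?_ ?_ ?_ x
  · refine Set.Finite.subset Set.finite_empty ?_
    intro g hg
    exact absurd (map_zero _) hg
  · intro u v hu hv
    refine Set.Finite.subset (hu.union hv) ?_
    intro g hg
    by_contra h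
    simp only [Set.mem_union, Set.mem_setOf_eq, not_or, not_not] at h
    exact hg (show (endComp 𝒜 hint c g) (u + v) = 0 by rw [map_add, h.1, h.2, add_zero])
  · intro k z hz
    obtain ⟨s, hs, -⟩ := gproj_spec 𝒜 hint (c z)
    refine Set.Finite.subset (s.finite_toSet.image (fun a => a - k)) ?_
    intro g hg
    have hgk : g + k ∈ s := by
      by_contra h
      apply hg
      show endComp 𝒜 hint c g z = 0
      rw [endComp_apply_of_mem 𝒜 hint c g hz]
      exact hs _ h
    exact ⟨g + k, hgk, by simp⟩

theorem endComp_gproj (𝒜 : G → Submodule F B) (hint : DirectSum.IsInternal 𝒜)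
    (c : Module.End F B) (g k : G) (x : B) :
    endComp 𝒜 hint c g (gproj 𝒜 hint k x) =
      gproj 𝒜 hint (g + k) (endComp 𝒜 hint c g x) := by
  refine homog_induction 𝒜 hint
    (p := fun x => endComp 𝒜 hint c g (gproj 𝒜 hint k x) =
      gproj 𝒜 hint (g + k) (endComp 𝒜 hint c g x)) ?_ ?_ ?_ x
  · simp only [map_zero]
  · intro u v hu hv
    simp only [map_add, hu, hv]
  · intro m z hz
    have hmem : endComp 𝒜 hint c g z ∈ 𝒜 (g + m) := by
      rw [endComp_apply_of_mem 𝒜 hint c g hz]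
      exact gproj_mem 𝒜 hint _ _
    rcases eq_or_ne m k with rfl | hne
    · rw [gproj_of_mem_same 𝒜 hint hz, gproj_of_mem_same 𝒜 hint hmem]
    · rw [gproj_of_mem_ne 𝒜 hint hz hne, map_zero,
        gproj_of_mem_ne 𝒜 hint hmem (fun h => hne (add_left_cancel h))]

/-- The graded ideal of elements killed by all `endComp c g`, `g ∉ T`. -/
noncomputable def idealT (𝒜 : G → Submodule F B) (hint : DirectSum.IsInternal 𝒜)
    (c : Module.End F B) (T : Finset G) : Submodule F B where
  carrier := {x | ∀ g ∉ T, endComp 𝒜 hint c g x = 0}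
  add_mem' := fun hx hy g hg => by rw [map_add, hx g hg, hy g hg, add_zero]
  zero_mem' := fun g hg => map_zero _
  smul_mem' := fun r x hx g hg => by rw [map_smul, hx g hg, smul_zero]

/-- Endomorphisms whose `(i+k)`-component vanishes on `𝒜 k`. -/
noncomputable def zSub (𝒜 : G → Submodule F B) (hint : DirectSum.IsInternal 𝒜) (i : G) :
    Submodule F (Module.End F B) where
  carrier := {c | ∀ k : G, ∀ x ∈ 𝒜 k, gproj 𝒜 hint (i + k) (c x) = 0}
  add_mem' := fun hc hd k x hx => by
    rw [LinearMap.add_apply, map_add, hc k x hx, hd k x hx, add_zero]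
  zero_mem' := fun k x hx => by simp
  smul_mem' := fun r c hc k x hx => by
    rw [LinearMap.smul_apply, map_smul, hc k x hx, smul_zero]

end CentroidGraded


/-- if a `G`-graded algebra is graded-simple, then its centroid is `G`-graded:
`C(A) = ⊕_g C(A)_g`. -/
theorem stmt_9 {F B : Type*} [Field F] [AddCommGroup B] [Module F B]
    {G : Type*} [AddCommGroup G] [DecidableEq G]
    (mul : B → B → B) (hbil : IsBilinearMul F mul)
    (𝒜 : G → Submodule F B) (hint : DirectSum.IsInternal 𝒜)
    (hgmul : ∀ g h : G, ∀ x ∈ 𝒜 g, ∀ y ∈ 𝒜 h, mul x y ∈ 𝒜 (g + h))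
    (hgs : IsGradedSimpleFam mul 𝒜) :
    iSupIndep (fun g => centroidComponent mul hbil 𝒜 g) ∧
    (⨆ g, centroidComponent mul hbil 𝒜 g) = centroid mul hbil := by
  classical
  constructor
  · -- independence of the homogeneous components of the centroid
    intro i
    rw [Submodule.disjoint_def]
    intro c hci hcrest
    have hZ : (⨆ j, ⨆ (_ : j ≠ i), centroidComponent mul hbil 𝒜 j) ≤ zSub 𝒜 hint i := by
      refine iSup_le fun j => iSup_le fun hj => ?_
      intro c' hc' k x hx
      have hdeg : c' x ∈ 𝒜 (j + k) := (Submodule.mem_inf.mp hc').2 k x hx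
      exact gproj_of_mem_ne 𝒜 hint hdeg fun h => hj (add_right_cancel h)
    have hz : ∀ k : G, ∀ x ∈ 𝒜 k, gproj 𝒜 hint (i + k) (c x) = 0 := hZ hcrest
    have hdeg : ∀ k : G, ∀ x ∈ 𝒜 k, c x ∈ 𝒜 (i + k) := (Submodule.mem_inf.mp hci).2
    show c = (0 : Module.End F B)
    apply ext_homog 𝒜 hint
    intro k x hx
    have h1 := hz k x hx
    rw [gproj_of_mem_same 𝒜 hint (hdeg k x hx)] at h1
    simpa using h1
  · apply le_antisymm
    · exact iSup_le fun g => inf_le_left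
    · intro c hc
      obtain ⟨a, b, hab⟩ := hgs.1
      have ha : a ≠ 0 := by rintro rfl; exact hab (zero_mul' mul hbil b)
      set T := (endComp_support_finite 𝒜 hint c a).toFinset with hT
      have haI : a ∈ idealT 𝒜 hint c T := by
        intro g hg
        by_contra h
        exact hg ((endComp_support_finite 𝒜 hint c a).mem_toFinset.mpr h)
      have hcent : ∀ g : G, endComp 𝒜 hint c g ∈ centroid mul hbil :=
        endComp_mem_centroid mul hbil 𝒜 hint hgmul hc
      have hIdeal : IsIdealIn mul ⊤ (idealT 𝒜 hint c T) := by
        refine ⟨le_top, fun x hx a' _ => ?_⟩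
        constructor
        · intro g hg
          have h2 := (hcent g a' x).2
          show endComp 𝒜 hint c g (mul a' x) = 0
          rw [h2, hx g hg, mul_zero' mul hbil]
        · intro g hg
          have h2 := (hcent g x a').1
          show endComp 𝒜 hint c g (mul x a') = 0
          rw [h2, hx g hg, zero_mul' mul hbil]
      have hGraded : IsGradedSubmoduleFam 𝒜 (idealT 𝒜 hint c T) := by
        apply le_antisymm
        · intro x hx
          obtain ⟨s, hs, hxe⟩ := gproj_spec 𝒜 hint x
          rw [hxe]
          refine Submodule.sum_mem _ fun k _ => ?_
          refine Submodule.mem_iSup_of_mem k ?_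
          refine Submodule.mem_inf.mpr ⟨?_, gproj_mem 𝒜 hint k x⟩
          intro g hg
          rw [endComp_gproj 𝒜 hint c g k x, hx g hg, map_zero]
        · exact iSup_le fun g => inf_le_left
      have hIT : idealT 𝒜 hint c T = ⊤ := by
        rcases hgs.2 _ hIdeal hGraded with h | h
        · exact absurd ((Submodule.mem_bot F).mp (h ▸ haI)) ha
        · exact h
      have hzero : ∀ g ∉ T, ∀ x : B, endComp 𝒜 hint c g x = 0 := by
        intro g hg x
        have hx : x ∈ idealT 𝒜 hint c T := hIT ▸ Submodule.mem_top
        exact hx g hg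
      have hrep : c = ∑ g ∈ T, endComp 𝒜 hint c g := by
        apply ext_homog 𝒜 hint
        intro h x hx
        have h0 : ∀ k ∉ T.image (· + h), gproj 𝒜 hint k (c x) = 0 := by
          intro k hk
          have hgT : k - h ∉ T := fun hmem =>
            hk (Finset.mem_image.mpr ⟨k - h, hmem, by abel⟩)
          have h3 := hzero (k - h) hgT x
          rw [endComp_apply_of_mem 𝒜 hint c (k - h) hx] at h3
          have he : k - h + h = k := by abel
          rwa [he] at h3
        calc c x = ∑ k ∈ T.image (· + h), gproj 𝒜 hint k (c x) :=
              sum_gproj_of_support_subset 𝒜 hint h0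
          _ = ∑ g ∈ T, gproj 𝒜 hint (g + h) (c x) :=
              Finset.sum_image fun a _ b _ hab => by
                have : a + h = b + h := hab
                exact add_right_cancel this
          _ = ∑ g ∈ T, endComp 𝒜 hint c g x :=
              Finset.sum_congr rfl fun g _ => (endComp_apply_of_mem 𝒜 hint c g hx).symm
          _ = (∑ g ∈ T, endComp 𝒜 hint c g) x := by rw [LinearMap.sum_apply]
      rw [hrep]
      refine Submodule.sum_mem _ fun g _ => Submodule.mem_iSup_of_mem g ?_
      exact Submodule.mem_inf.mpr
        ⟨hcent g, endComp_mem_endDegree 𝒜 hint c g⟩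
end

section
/- Let (A, Γ, G, δ) be a graded-simple G-graded algebra and let H = {g ∈ G : C(A)_g ≠ 0} be the support of the induced grading on the centroid. Then H is a subgroup of G. -/
/-! ### Auxiliary lemmas for Statement 10 -/

section Stmt10Aux

variable {F B : Type*} [Field F] [AddCommGroup B] [Module F B]
    {G : Type*} [AddCommGroup G] [DecidableEq G]

theorem aux_mul_zero_right (mul : B → B → B) (hbil : IsBilinearMul F mul) (x : B) :
    mul x 0 = 0 := by
  have := hbil.2.1 x 0 0; simpa using this.symm

theorem aux_mul_zero_left (mul : B → B → B) (hbil : IsBilinearMul F mul) (x : B) :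
    mul 0 x = 0 := by
  have := hbil.1 0 0 x; simpa using this.symm

/-- The `(g + g'')` component of a sum of terms `w g' ∈ 𝒜 (g + g')`. -/
theorem aux_decompose_sum_shift (𝒜 : G → Submodule F B) [DirectSum.Decomposition 𝒜]
    (g : G) (s : Finset G) (w : G → B)
    (hw : ∀ g' ∈ s, w g' ∈ 𝒜 (g + g')) (g'' : G) (hg'' : g'' ∈ s) :
    ((DirectSum.decompose 𝒜 (∑ g' ∈ s, w g') (g + g'') : 𝒜 (g + g'')) : B) = w g'' := by
  classical
  rw [DirectSum.decompose_sum, DFinsupp.finset_sum_apply, AddSubmonoidClass.coe_finset_sum,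
    Finset.sum_eq_single g'']
  · exact DirectSum.decompose_of_mem_same 𝒜 (hw g'' hg'')
  · intro g' hg' hne
    exact DirectSum.decompose_of_mem_ne 𝒜 (hw g' hg') (fun h => hne (add_left_cancel h))
  · intro h; exact absurd hg'' h

/-- A nonzero homogeneous centroid element is injective. -/
theorem aux_injective (mul : B → B → B) (hbil : IsBilinearMul F mul)
    (𝒜 : G → Submodule F B) [DirectSum.Decomposition 𝒜]
    (hgs : IsGradedSimpleFam mul 𝒜) {g : G} {c : Module.End F B}
    (hc : c ∈ centroidComponent mul hbil 𝒜 g) (hc0 : c ≠ 0) :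
    Function.Injective c := by
  classical
  obtain ⟨hcen, hdeg⟩ := Submodule.mem_inf.mp hc
  have hideal : IsIdealIn mul ⊤ (LinearMap.ker c) := by
    refine ⟨le_top, fun x hx a _ => ?_⟩
    rw [LinearMap.mem_ker] at hx
    constructor
    · rw [LinearMap.mem_ker, (hcen a x).2, hx, aux_mul_zero_right mul hbil]
    · rw [LinearMap.mem_ker, (hcen x a).1, hx, aux_mul_zero_left mul hbil]
  have hgraded : IsGradedSubmoduleFam 𝒜 (LinearMap.ker c) := by
    refine le_antisymm ?_ (iSup_le fun g' => inf_le_left)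
    intro x hx
    rw [← DirectSum.sum_support_decompose 𝒜 x]
    refine Submodule.sum_mem _ fun g' hg' => ?_
    refine Submodule.mem_iSup_of_mem g' (Submodule.mem_inf.mpr
      ⟨?_, (DirectSum.decompose 𝒜 x g').2⟩)
    have hxsum : (∑ g'' ∈ (DirectSum.decompose 𝒜 x).support,
        c ((DirectSum.decompose 𝒜 x g'' : B))) = 0 := by
      rw [← map_sum, DirectSum.sum_support_decompose]
      exact hx
    have key := aux_decompose_sum_shift 𝒜 g (DirectSum.decompose 𝒜 x).support
      (fun g'' => c ((DirectSum.decompose 𝒜 x g'' : B)))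
      (fun g'' _ => hdeg g'' _ (DirectSum.decompose 𝒜 x g'').2) g' hg'
    rw [hxsum] at key
    simp only [DirectSum.decompose_zero, DirectSum.zero_apply,
      ZeroMemClass.coe_zero] at key
    exact LinearMap.mem_ker.mpr key.symm
  rcases hgs.2 _ hideal hgraded with h | h
  · exact LinearMap.ker_eq_bot.mp h
  · exact absurd (LinearMap.ker_eq_top.mp h) hc0

/-- A nonzero homogeneous centroid element is surjective. -/
theorem aux_surjective (mul : B → B → B) (hbil : IsBilinearMul F mul)
    (𝒜 : G → Submodule F B) [DirectSum.Decomposition 𝒜]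
    (hgs : IsGradedSimpleFam mul 𝒜) {g : G} {c : Module.End F B}
    (hc : c ∈ centroidComponent mul hbil 𝒜 g) (hc0 : c ≠ 0) :
    Function.Surjective c := by
  classical
  obtain ⟨hcen, hdeg⟩ := Submodule.mem_inf.mp hc
  have hideal : IsIdealIn mul ⊤ (LinearMap.range c) := by
    refine ⟨le_top, fun x hx a _ => ?_⟩
    obtain ⟨y, rfl⟩ := LinearMap.mem_range.mp hx
    exact ⟨⟨mul a y, (hcen a y).2⟩, ⟨mul y a, (hcen y a).1⟩⟩
  have hgraded : IsGradedSubmoduleFam 𝒜 (LinearMap.range c) := by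
    refine le_antisymm ?_ (iSup_le fun g' => inf_le_left)
    intro x hx
    obtain ⟨y, rfl⟩ := LinearMap.mem_range.mp hx
    rw [← DirectSum.sum_support_decompose 𝒜 y, map_sum]
    refine Submodule.sum_mem _ fun g' _ => ?_
    exact Submodule.mem_iSup_of_mem (g + g') (Submodule.mem_inf.mpr
      ⟨LinearMap.mem_range_self c _, hdeg g' _ (DirectSum.decompose 𝒜 y g').2⟩)
  rcases hgs.2 _ hideal hgraded with h | h
  · exact absurd (LinearMap.range_eq_bot.mp h) hc0
  · exact LinearMap.range_eq_top.mp h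




theorem aux_zero_mem (mul : B → B → B) (hbil : IsBilinearMul F mul)
    (𝒜 : G → Submodule F B) (hgs : IsGradedSimpleFam mul 𝒜) :
    centroidComponent mul hbil 𝒜 (0 : G) ≠ ⊥ := by
  obtain ⟨a, b, hab⟩ := hgs.1
  rw [Submodule.ne_bot_iff]
  refine ⟨LinearMap.id, Submodule.mem_inf.mpr ⟨?_, ?_⟩, ?_⟩
  · intro x y; exact ⟨rfl, rfl⟩
  · intro g' x hx; simpa using hx
  · intro h0
    exact hab (by simpa using congrArg (fun f : Module.End F B => f (mul a b)) h0)

theorem aux_add_mem (mul : B → B → B) (hbil : IsBilinearMul F mul)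
    (𝒜 : G → Submodule F B) [DirectSum.Decomposition 𝒜]
    (hgs : IsGradedSimpleFam mul 𝒜) {g h : G}
    (hg : centroidComponent mul hbil 𝒜 g ≠ ⊥)
    (hh : centroidComponent mul hbil 𝒜 h ≠ ⊥) :
    centroidComponent mul hbil 𝒜 (g + h) ≠ ⊥ := by
  obtain ⟨c, hc, hc0⟩ := (Submodule.ne_bot_iff _).mp hg
  obtain ⟨d, hd, hd0⟩ := (Submodule.ne_bot_iff _).mp hh
  obtain ⟨ccen, cdeg⟩ := Submodule.mem_inf.mp hc
  obtain ⟨dcen, ddeg⟩ := Submodule.mem_inf.mp hd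
  obtain ⟨a, b, hab⟩ := hgs.1
  have hci := aux_injective mul hbil 𝒜 hgs hc hc0
  have hdi := aux_injective mul hbil 𝒜 hgs hd hd0
  rw [Submodule.ne_bot_iff]
  refine ⟨c ∘ₗ d, Submodule.mem_inf.mpr ⟨?_, ?_⟩, ?_⟩
  · intro x y
    constructor
    · show c (d (mul x y)) = mul (c (d x)) y
      rw [(dcen x y).1, (ccen (d x) y).1]
    · show c (d (mul x y)) = mul x (c (d y))
      rw [(dcen x y).2, (ccen x (d y)).2]
  · intro g' x hx
    show c (d x) ∈ 𝒜 (g + h + g')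
    rw [add_assoc]
    exact cdeg _ _ (ddeg g' x hx)
  · intro h0
    have h1 : c (d (mul a b)) = 0 := by
      simpa using congrArg (fun f : Module.End F B => f (mul a b)) h0
    have h2 : d (mul a b) = 0 := hci (h1.trans (map_zero c).symm)
    exact hab (hdi (h2.trans (map_zero d).symm))

theorem aux_neg_mem (mul : B → B → B) (hbil : IsBilinearMul F mul)
    (𝒜 : G → Submodule F B) [DirectSum.Decomposition 𝒜]
    (hgs : IsGradedSimpleFam mul 𝒜) {g : G}
    (hg : centroidComponent mul hbil 𝒜 g ≠ ⊥) :
    centroidComponent mul hbil 𝒜 (-g) ≠ ⊥ := by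
  classical
  obtain ⟨c, hc, hc0⟩ := (Submodule.ne_bot_iff _).mp hg
  obtain ⟨ccen, cdeg⟩ := Submodule.mem_inf.mp hc
  obtain ⟨a, b, hab⟩ := hgs.1
  have hinj := aux_injective mul hbil 𝒜 hgs hc hc0
  have hsurj := aux_surjective mul hbil 𝒜 hgs hc hc0
  set E := LinearEquiv.ofBijective (c : B →ₗ[F] B) ⟨hinj, hsurj⟩ with hE
  have hce : ∀ x, c (E.symm x) = x := fun x => E.apply_symm_apply x
  rw [Submodule.ne_bot_iff]
  refine ⟨(E.symm : B →ₗ[F] B), Submodule.mem_inf.mpr ⟨?_, ?_⟩, ?_⟩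
  · intro x y
    constructor
    · show E.symm (mul x y) = mul (E.symm x) y
      apply hinj
      show c (E.symm (mul x y)) = c (mul (E.symm x) y)
      rw [hce, (ccen (E.symm x) y).1, hce]
    · show E.symm (mul x y) = mul x (E.symm y)
      apply hinj
      show c (E.symm (mul x y)) = c (mul x (E.symm y))
      rw [hce, (ccen x (E.symm y)).2, hce]
  · intro g' x hx
    show E.symm x ∈ 𝒜 (-g + g')
    rw [← DirectSum.sum_support_decompose 𝒜 (E.symm x)]
    refine Submodule.sum_mem _ fun g'' hg'' => ?_
    by_cases hcase : g'' = -g + g'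
    · rw [← hcase]
      exact (DirectSum.decompose 𝒜 (E.symm x) g'').2
    · have hsum : (∑ k ∈ (DirectSum.decompose 𝒜 (E.symm x)).support,
          c ((DirectSum.decompose 𝒜 (E.symm x) k : B))) = x := by
        rw [← map_sum, DirectSum.sum_support_decompose]
        exact hce x
      have key := aux_decompose_sum_shift 𝒜 g (DirectSum.decompose 𝒜 (E.symm x)).support
        (fun k => c ((DirectSum.decompose 𝒜 (E.symm x) k : B)))
        (fun k _ => cdeg k _ (DirectSum.decompose 𝒜 (E.symm x) k).2) g'' hg''
      rw [hsum] at key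
      have hne : g' ≠ g + g'' := fun hgg => hcase (by rw [hgg, neg_add_cancel_left])
      rw [DirectSum.decompose_of_mem_ne 𝒜 hx hne] at key
      have hz : (DirectSum.decompose 𝒜 (E.symm x) g'' : B) = 0 :=
        hinj (key.symm.trans (map_zero c).symm)
      rw [hz]
      exact zero_mem _
  · intro h0
    have h1 : E.symm (mul a b) = 0 := by
      simpa using congrArg (fun f : Module.End F B => f (mul a b)) h0
    exact hab (by rw [← hce (mul a b), h1, map_zero])

end Stmt10Aux

/-- for a graded-simple `G`-graded algebra, the support of the induced grading on
the centroid is a subgroup of `G`. -/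
theorem stmt_10 {F B : Type*} [Field F] [AddCommGroup B] [Module F B]
    {G : Type*} [AddCommGroup G] [DecidableEq G]
    (mul : B → B → B) (hbil : IsBilinearMul F mul)
    (𝒜 : G → Submodule F B) (hint : DirectSum.IsInternal 𝒜)
    (hgmul : ∀ g h : G, ∀ x ∈ 𝒜 g, ∀ y ∈ 𝒜 h, mul x y ∈ 𝒜 (g + h))
    (hgs : IsGradedSimpleFam mul 𝒜) :
    ∃ H : AddSubgroup G, (H : Set G) = {g : G | centroidComponent mul hbil 𝒜 g ≠ ⊥} := by
  letI := hint.chooseDecomposition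
  exact ⟨{ carrier := {g : G | centroidComponent mul hbil 𝒜 g ≠ ⊥},
           zero_mem' := aux_zero_mem mul hbil 𝒜 hgs,
           add_mem' := fun hg hh => aux_add_mem mul hbil 𝒜 hgs hg hh,
           neg_mem' := fun hg => aux_neg_mem mul hbil 𝒜 hgs hg }, rfl⟩
end

section
/- Let F be algebraically closed, π: G → Ḡ a surjective homomorphism of abelian groups with finite kernel H = {h₁,…,hₙ} of order n not divisible by char F, and A a central simple Ḡ-graded algebra. Choose characters χ₁,…,χₙ: G → F^× whose restrictions to H are the n distinct characters of H. Then the linear map Φ: L_π(A) → A × ⋯ × A (n copies) defined by x_{π(g)} ⊗ g ↦ (χ₁(g)x_{π(g)}, …, χₙ(g)x_{π(g)}) is an algebra isomorphism. -/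
/-- Auxiliary: if `M` is an invertible matrix over `F` and `∑ j, M i j • v j = 0` for all `i`,
then `v = 0`. -/
lemma aux_matrix_smul_zero {F A : Type*} [Field F] [AddCommGroup A] [Module F A] {n : ℕ}
    {M : Matrix (Fin n) (Fin n) F} (hM : IsUnit M) {v : Fin n → A}
    (hv : ∀ i, ∑ j, M i j • v j = 0) : v = 0 := by
  funext k
  have h1 : M⁻¹ * M = 1 := Matrix.nonsing_inv_mul M ((Matrix.isUnit_iff_isUnit_det _).mp hM)
  have h2 : v k = ∑ j, ((M⁻¹ * M) k j) • v j := by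
    rw [h1]
    simp [Matrix.one_apply, ite_smul]
  rw [h2]
  simp only [Matrix.mul_apply, Finset.sum_smul, mul_smul]
  rw [Finset.sum_comm]
  simp only [← Finset.smul_sum, hv, smul_zero, Finset.sum_const_zero]
  rfl

/-- over an algebraically closed field, if `ker π` has order `n` not divisible by
`char F` and `χ₁, …, χₙ : G → F^×` extend the `n` distinct characters of `ker π`, then
`x_{π(g)} ⊗ g ↦ (χ₁(g)x, …, χₙ(g)x)` is an algebra isomorphism `L_π(A) → A × ⋯ × A`. -/
theorem stmt_13 {F A : Type*} [Field F] [IsAlgClosed F] [AddCommGroup A] [Module F A]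
    {G Gb : Type*} [AddCommGroup G] [AddCommGroup Gb]
    (mul : A → A → A) (hbil : IsBilinearMul F mul)
    (π : G →+ Gb) (hsurj : Function.Surjective π) (hfin : Finite ↥π.ker)
    (𝒜 : Gb → Submodule F A)
    (hint : ∀ [DecidableEq Gb], DirectSum.IsInternal 𝒜)
    (hgmul : ∀ g h : Gb, ∀ x ∈ 𝒜 g, ∀ y ∈ 𝒜 h, mul x y ∈ 𝒜 (g + h))
    (hsimple : IsSimpleAlgOn mul (⊤ : Submodule F A))
    (hcentral : ∀ c ∈ centroidSet mul, ∃ r : F, c = r • (LinearMap.id : Module.End F A))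
    (n : ℕ) (hn : Nat.card ↥π.ker = n) (hchar : ¬ (ringChar F ∣ n))
    (χ : Fin n → (Multiplicative G →* Fˣ))
    (hχ : ∀ i j : Fin n, i ≠ j → ∃ h : ↥π.ker,
      χ i (Multiplicative.ofAdd (h : G)) ≠ χ j (Multiplicative.ofAdd (h : G))) :
    -- `Φ` is the map `x_{π(g)} ⊗ g ↦ (χ₁(g)x_{π(g)}, …, χₙ(g)x_{π(g)})`
    ∀ Φ : ↥(loopSubmodule π 𝒜) → (Fin n → A),
      (Φ = fun f i => f.val.sum
        fun g x => (((χ i (Multiplicative.ofAdd g) : Fˣ) : F) • x)) →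
      (∀ (c : F) (f f' : ↥(loopSubmodule π 𝒜)), Φ (c • f + f') = c • Φ f + Φ f') ∧
      (∀ f f' : ↥(loopSubmodule π 𝒜),
        Φ (loopMul mul π 𝒜 hgmul f f') = fun i => mul (Φ f i) (Φ f' i)) ∧
      Function.Bijective Φ := by
  intro Φ hΦ
  classical
  -- coordinate linear maps
  set L : Fin n → (G →₀ A) →ₗ[F] A := fun i =>
    Finsupp.lsum F fun g =>
      (((χ i (Multiplicative.ofAdd g) : Fˣ) : F) • (LinearMap.id : A →ₗ[F] A)) with hLdef
  set Φₗ : ↥(loopSubmodule π 𝒜) →ₗ[F] (Fin n → A) :=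
    LinearMap.pi fun i => (L i).comp (Submodule.subtype _) with hΦₗdef
  have hΦL : ∀ (f : ↥(loopSubmodule π 𝒜)) (i : Fin n), Φ f i = L i f.val := by
    subst hΦ
    intro f i
    rfl
  have hΦeq : Φ = ⇑Φₗ := by
    funext f i
    rw [hΦL f i]
    rfl
  refine ⟨?_, ?_, ?_⟩
  · -- linearity
    intro c f f'
    rw [hΦeq, map_add, map_smul]
  · -- multiplicativity
    intro f f'
    funext i
    set c : G → F := fun g => ((χ i (Multiplicative.ofAdd g) : Fˣ) : F) with hcdef
    have hhom : ∀ g₁ g₂ : G, c (g₁ + g₂) = c g₁ * c g₂ := by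
      intro g₁ g₂
      have h : Multiplicative.ofAdd (g₁ + g₂)
          = Multiplicative.ofAdd g₁ * Multiplicative.ofAdd g₂ := rfl
      rw [hcdef]
      simp only [h, map_mul, Units.val_mul]
    set mulₗ : A →ₗ[F] A →ₗ[F] A :=
      LinearMap.mk₂ F mul hbil.1 hbil.2.2.1 hbil.2.1 hbil.2.2.2 with hmulₗdef
    have eL : ∀ w : G →₀ A, L i w = w.sum fun a x => c a • x := fun w => rfl
    have key : ∀ u v : G →₀ A, L i (convMul mul u v) = mul (L i u) (L i v) := by
      intro u v
      calc L i (convMul mul u v)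
          = u.sum fun a x => v.sum fun b y => c (a + b) • mul x y := by
            rw [convMul, map_finsuppSum]
            refine Finsupp.sum_congr fun a _ => ?_
            rw [map_finsuppSum]
            refine Finsupp.sum_congr fun b _ => ?_
            rw [hLdef]
            rw [Finsupp.lsum_single]
            rfl
        _ = u.sum fun a x => v.sum fun b y => mul (c a • x) (c b • y) := by
            refine Finsupp.sum_congr fun a _ => Finsupp.sum_congr fun b _ => ?_
            rw [hbil.2.2.1, hbil.2.2.2, smul_smul, hhom]
        _ = mul (L i u) (L i v) := by
            rw [eL u, eL v]
            change _ = mulₗ.flip (v.sum fun b y => c b • y) (u.sum fun a x => c a • x)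
            rw [map_finsuppSum]
            refine Finsupp.sum_congr fun a _ => ?_
            change _ = mulₗ (c a • u a) (v.sum fun b y => c b • y)
            rw [map_finsuppSum]
            rfl
    rw [hΦL, hΦL f i, hΦL f' i]
    exact key f.val f'.val
  · -- bijectivity
    haveI := Fintype.ofFinite ↥π.ker
    have hcard : Fintype.card ↥π.ker = n := by rw [← Nat.card_eq_fintype_card, hn]
    let e : ↥π.ker ≃ Fin n := Fintype.equivFinOfCardEq hcard
    let hh : Fin n → G := fun j => ((e.symm j : ↥π.ker) : G)
    have hπh : ∀ j, π (hh j) = 0 := fun j => (e.symm j).2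
    have hhe : ∀ x : ↥π.ker, hh (e x) = (x : G) := by
      intro x
      show ((e.symm (e x) : ↥π.ker) : G) = (x : G)
      rw [Equiv.symm_apply_apply]
    -- restricted characters and the coset matrices
    let ψ : Fin n → (Multiplicative ↥π.ker →* F) := fun i =>
      (Units.coeHom F).comp ((χ i).comp (AddMonoidHom.toMultiplicative π.ker.subtype))
    have hψ : ∀ i (x : ↥π.ker),
        ψ i (Multiplicative.ofAdd x) = ((χ i (Multiplicative.ofAdd (x : G)) : Fˣ) : F) :=
      fun i x => rfl
    have hψinj : Function.Injective ψ := by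
      intro i j hij
      by_contra hne
      obtain ⟨h, hne'⟩ := hχ i j hne
      exact hne' (Units.ext (by rw [← hψ, ← hψ, hij]))
    let Mmat : G → Matrix (Fin n) (Fin n) F := fun g₀ =>
      Matrix.of fun i j => ((χ i (Multiplicative.ofAdd (g₀ + hh j)) : Fˣ) : F)
    have hMunit : ∀ g₀ : G, IsUnit (Mmat g₀) := by
      intro g₀
      rw [← Matrix.linearIndependent_rows_iff_isUnit]
      let b : Fin n → Multiplicative ↥π.ker := fun j => Multiplicative.ofAdd (e.symm j)
      have hbsurj : Function.Surjective b := by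
        intro x
        refine ⟨e x.toAdd, ?_⟩
        show Multiplicative.ofAdd (e.symm (e x.toAdd)) = x
        rw [Equiv.symm_apply_apply]
        rfl
      let T : (Multiplicative ↥π.ker → F) →ₗ[F] (Fin n → F) := LinearMap.funLeft F F b
      have hT : Function.Injective T := LinearMap.funLeft_injective_of_surjective F F b hbsurj
      have hli : LinearIndependent F fun i => ⇑(ψ i) :=
        (linearIndependent_monoidHom (Multiplicative ↥π.ker) F).comp ψ hψinj
      have hli2 : LinearIndependent F fun i => T ⇑(ψ i) :=
        hli.map' T (LinearMap.ker_eq_bot.mpr hT)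
      have hrows : (fun i => Mmat g₀ i)
          = (fun i : Fin n => χ i (Multiplicative.ofAdd g₀)) • (fun i => T ⇑(ψ i)) := by
        funext i j
        show ((χ i (Multiplicative.ofAdd (g₀ + hh j)) : Fˣ) : F)
          = (χ i (Multiplicative.ofAdd g₀)) • (ψ i (b j))
        have h : Multiplicative.ofAdd (g₀ + hh j)
            = Multiplicative.ofAdd g₀ * Multiplicative.ofAdd (hh j) := rfl
        rw [h, map_mul, Units.val_mul]
        rfl
      change LinearIndependent F (fun i => Mmat g₀ i)
      rw [hrows]
      exact hli2.units_smul _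
    -- projections onto homogeneous components
    have hI : DirectSum.IsInternal 𝒜 := hint
    let proj : Gb → Module.End F A := fun gb =>
      (𝒜 gb).subtype ∘ₗ (DirectSum.component F Gb (fun g => ↥(𝒜 g)) gb) ∘ₗ
        (LinearEquiv.ofBijective (DirectSum.coeLinearMap 𝒜) hI).symm.toLinearMap
    have hproj_same : ∀ (gb : Gb) (a : A) (ha : a ∈ 𝒜 gb), proj gb a = a := by
      intro gb a ha
      show (((LinearEquiv.ofBijective (DirectSum.coeLinearMap 𝒜) hI).symm a) gb : A) = a
      rw [hI.ofBijective_coeLinearMap_of_mem ha]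
    have hproj_ne : ∀ (gb gb' : Gb) (a : A), gb' ≠ gb → a ∈ 𝒜 gb' → proj gb a = 0 := by
      intro gb gb' a hne ha
      show (((LinearEquiv.ofBijective (DirectSum.coeLinearMap 𝒜) hI).symm a) gb : A) = 0
      rw [hI.ofBijective_coeLinearMap_of_mem_ne hne ha]
      rfl
    -- key coset-sum identity
    have hkey : ∀ (f : ↥(loopSubmodule π 𝒜)) (g₀ : G) (i : Fin n),
        ∑ j, Mmat g₀ i j • f.val (g₀ + hh j) = proj (π g₀) (L i f.val) := by
      intro f g₀ i
      have h1 : proj (π g₀) (L i f.val) = ∑ g ∈ f.val.support,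
          if π g = π g₀ then ((χ i (Multiplicative.ofAdd g) : Fˣ) : F) • f.val g else 0 := by
        have h0 : L i f.val
            = f.val.sum fun g x => ((χ i (Multiplicative.ofAdd g) : Fˣ) : F) • x := rfl
        rw [h0, map_finsuppSum, Finsupp.sum]
        refine Finset.sum_congr rfl fun g hg => ?_
        rw [map_smul]
        by_cases hgg : π g = π g₀
        · rw [if_pos hgg, hproj_same _ _ (hgg ▸ f.2 g)]
        · rw [if_neg hgg, hproj_ne _ _ _ hgg (f.2 g), smul_zero]
      rw [h1, ← Finset.sum_filter]
      rw [← Finset.sum_filter_of_ne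
        (p := fun j => g₀ + hh j ∈ f.val.support) (fun j _ hne =>
          Finsupp.mem_support_iff.mpr fun h0 => hne (by rw [h0, smul_zero]))]
      refine Finset.sum_bij' (fun j _ => g₀ + hh j)
        (fun g hg => e ⟨g - g₀, by
          rw [AddMonoidHom.mem_ker, map_sub, (Finset.mem_filter.mp hg).2, sub_self]⟩)
        ?_ ?_ ?_ ?_ ?_
      · intro j hj
        rw [Finset.mem_filter]
        refine ⟨(Finset.mem_filter.mp hj).2, ?_⟩
        rw [map_add, hπh, add_zero]
      · intro g hg
        rw [Finset.mem_filter]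
        refine ⟨Finset.mem_univ _, ?_⟩
        simp only [hhe]
        show g₀ + (g - g₀) ∈ f.val.support
        have h9 : g₀ + (g - g₀) = g := by abel
        rw [h9]
        exact (Finset.mem_filter.mp hg).1
      · intro j hj
        rw [Equiv.apply_eq_iff_eq_symm_apply]
        exact Subtype.ext (add_sub_cancel_left g₀ (hh j))
      · intro g hg
        simp only [hhe]
        show g₀ + (g - g₀) = g
        abel
      · intro j hj
        rfl
    -- injectivity
    have hker : ∀ f : ↥(loopSubmodule π 𝒜), Φₗ f = 0 → f = 0 := by
      intro f hf
      have hv : ∀ g₀ : G, f.val g₀ = 0 := by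
        intro g₀
        have hzero : ∀ i, ∑ j, Mmat g₀ i j • f.val (g₀ + hh j) = 0 := by
          intro i
          rw [hkey f g₀ i]
          have h3 : L i f.val = Φₗ f i := rfl
          rw [h3, hf]
          simp
        have h4 := aux_matrix_smul_zero (hMunit g₀)
          (v := fun j => f.val (g₀ + hh j)) hzero
        have h5 := congrFun h4 (e ⟨0, zero_mem _⟩)
        rw [hhe] at h5
        simpa using h5
      exact Subtype.ext (Finsupp.ext hv)
    -- surjectivity helpers
    have hsingle : ∀ (i : Fin n) (gb : Gb) (a : A), a ∈ 𝒜 gb →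
        ∃ f : ↥(loopSubmodule π 𝒜), Φₗ f = Pi.single i a := by
      intro i gb a ha
      obtain ⟨g₀, hg₀⟩ := hsurj gb
      have hMdet : IsUnit (Mmat g₀).det := (Matrix.isUnit_iff_isUnit_det _).mp (hMunit g₀)
      set cvec : Fin n → F := (Mmat g₀)⁻¹.mulVec (Pi.single i 1) with hcvec
      have hMc : (Mmat g₀).mulVec cvec = Pi.single i 1 := by
        rw [hcvec, Matrix.mulVec_mulVec, Matrix.mul_nonsing_inv _ hMdet, Matrix.one_mulVec]
      set fv : G →₀ A := ∑ j, Finsupp.single (g₀ + hh j) (cvec j • a) with hfv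
      have hfmem : fv ∈ loopSubmodule π 𝒜 := by
        intro g
        rw [hfv, Finsupp.finset_sum_apply]
        refine Submodule.sum_mem _ fun j _ => ?_
        rw [Finsupp.single_apply]
        split_ifs with hgj
        · have h6 : π g = gb := by rw [← hgj, map_add, hπh, add_zero, hg₀]
          rw [h6]
          exact Submodule.smul_mem _ _ ha
        · exact zero_mem _
      refine ⟨⟨fv, hfmem⟩, ?_⟩
      funext i'
      show L i' fv = (Pi.single i a : Fin n → A) i'
      rw [hfv, map_sum]
      have h7 : ∀ j, L i' (Finsupp.single (g₀ + hh j) (cvec j • a))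
          = (Mmat g₀ i' j * cvec j) • a := by
        intro j
        rw [hLdef, Finsupp.lsum_single]
        show ((χ i' (Multiplicative.ofAdd (g₀ + hh j)) : Fˣ) : F) • (cvec j • a) = _
        rw [smul_smul]
        rfl
      rw [Finset.sum_congr rfl fun j _ => h7 j, ← Finset.sum_smul]
      have h8 : ∑ j, Mmat g₀ i' j * cvec j = (Mmat g₀).mulVec cvec i' := rfl
      rw [h8, hMc, Pi.single_apply, Pi.single_apply, ite_smul, one_smul, zero_smul]
    have hrange : ∀ (i : Fin n) (a : A), ∃ f, Φₗ f = Pi.single i a := by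
      intro i a
      have ha : a ∈ ⨆ gb, 𝒜 gb := by rw [hI.submodule_iSup_eq_top]; trivial
      refine Submodule.iSup_induction (motive := fun a => ∃ f, Φₗ f = Pi.single i a) 𝒜 ha
        (fun gb x hx => hsingle i gb x hx) ⟨0, by rw [map_zero, Pi.single_zero]⟩ ?_
      rintro x y ⟨f₁, h₁⟩ ⟨f₂, h₂⟩
      exact ⟨f₁ + f₂, by rw [map_add, h₁, h₂, Pi.single_add]⟩
    rw [hΦeq]
    constructor
    · exact LinearMap.ker_eq_bot.mp (LinearMap.ker_eq_bot'.mpr hker)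
    · intro t
      choose fs hfs using fun i => hrange i (t i)
      refine ⟨∑ i, fs i, ?_⟩
      rw [map_sum]
      simp only [hfs]
      exact Finset.univ_sum_single t
end

section
/- Let G be an abelian group and (B, Γ, G, δ) a semisimple G-graded algebra (B is a finite direct sum of simple ideals). Then B decomposes as a direct sum of graded ideals B = B¹ ⊕ ⋯ ⊕ Bⁿ where each (Bⁱ, Γ|_{Bⁱ}, G, δ|_{Bⁱ}) is graded-simple and semisimple; each graded-simple ideal is a direct sum of some of the simple ideals of B, and the graded-simple factors are uniquely determined up to reordering. -/
namespace Stmt14Aux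
open DirectSum

variable {F B : Type*} [Field F] [AddCommGroup B] [Module F B]
variable {ι : Type*} [DecidableEq ι]

open scoped Classical

/-- component of `x` in position `i` of an internal decomposition. -/
noncomputable def cp (f : ι → Submodule F B) [Decomposition f] (i : ι) (x : B) : B :=
  (decompose f x i : B)

lemma cp_mem (f : ι → Submodule F B) [Decomposition f] (i : ι) (x : B) : cp f i x ∈ f i :=
  (decompose f x i).2

lemma cp_add (f : ι → Submodule F B) [Decomposition f] (i : ι) (x y : B) :
    cp f i (x + y) = cp f i x + cp f i y := by
  simp [cp, decompose_add]

lemma cp_zero (f : ι → Submodule F B) [Decomposition f] (i : ι) : cp f i 0 = 0 := by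
  simp [cp, decompose_zero]

lemma cp_of_mem_same (f : ι → Submodule F B) [Decomposition f] {i : ι} {x : B}
    (hx : x ∈ f i) : cp f i x = x :=
  decompose_of_mem_same f hx

lemma cp_of_mem_ne (f : ι → Submodule F B) [Decomposition f] {i j : ι} {x : B}
    (hx : x ∈ f i) (hij : i ≠ j) : cp f j x = 0 :=
  decompose_of_mem_ne f hx hij

lemma sum_cp (f : ι → Submodule F B) [Decomposition f] (x : B) :
    ∑ i ∈ (decompose f x).support, cp f i x = x :=
  sum_support_decompose f x

lemma cp_of_not_mem_support (f : ι → Submodule F B) [Decomposition f] {i : ι} {x : B}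
    (h : i ∉ (DirectSum.decompose f x).support) : cp f i x = 0 := by
  rw [cp, DFinsupp.notMem_support_iff.mp h, ZeroMemClass.coe_zero]

lemma cp_finset_sum (f : ι → Submodule F B) [Decomposition f] (i : ι) {α : Type*}
    (s : Finset α) (u : α → B) : cp f i (∑ j ∈ s, u j) = ∑ j ∈ s, cp f i (u j) := by
  induction s using Finset.induction with
  | empty => simp [cp_zero]
  | insert a s h ih => simp [Finset.sum_insert h, cp_add, ih]

lemma eq_zero_of_cp (f : ι → Submodule F B) [Decomposition f] {x : B}
    (h : ∀ i, cp f i x = 0) : x = 0 := by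
  rw [← sum_cp f x]
  exact Finset.sum_eq_zero fun i _ => h i

lemma mem_biSup_of_cp (f : ι → Submodule F B) [Decomposition f] (A : Set ι) {x : B}
    (h : ∀ j ∉ A, cp f j x = 0) : x ∈ ⨆ j ∈ A, f j := by
  rw [← sum_cp f x]
  refine Submodule.sum_mem _ fun i _ => ?_
  by_cases hiA : i ∈ A
  · exact Submodule.mem_iSup_of_mem i (Submodule.mem_iSup_of_mem hiA (cp_mem f i x))
  · rw [h i hiA]; exact zero_mem _

lemma cp_eq_zero_of_mem_biSup (f : ι → Submodule F B) [Decomposition f] (A : Set ι) {x : B}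
    (hx : x ∈ ⨆ j ∈ A, f j) : ∀ j ∉ A, cp f j x = 0 := by
  refine Submodule.iSup_induction (fun i => ⨆ _ : i ∈ A, f i) (motive := fun y => ∀ j ∉ A, cp f j y = 0)
    hx ?_ ?_ ?_
  · intro i y hy j hj
    have hy' : y ∈ ⨆ _ : i ∈ A, f i := hy
    by_cases hiA : i ∈ A
    · rw [iSup_pos hiA] at hy'
      exact cp_of_mem_ne f hy' (fun hij => hj (hij ▸ hiA))
    · rw [iSup_neg hiA] at hy'
      rw [(Submodule.mem_bot F).mp hy']; exact cp_zero f j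
  · intro j _; exact cp_zero f j
  · intro y z hy hz j hj
    rw [cp_add]; rw [hy j hj, hz j hj, add_zero]

lemma graded_iff (f : ι → Submodule F B) [Decomposition f] (P : Submodule F B) :
    (P = ⨆ i, P ⊓ f i) ↔ ∀ x ∈ P, ∀ i, cp f i x ∈ P := by
  constructor
  · intro hP x hx i
    rw [hP] at hx
    refine Submodule.iSup_induction (fun i => P ⊓ f i) (motive := fun y => ∀ i, cp f i y ∈ P)
      hx ?_ ?_ ?_ i
    · intro i0 y hy i'
      rcases (hy : y ∈ P ⊓ f i0) with ⟨hyP, hyf⟩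
      by_cases h : i0 = i'
      · subst h; rw [cp_of_mem_same f hyf]; exact hyP
      · rw [cp_of_mem_ne f hyf h]; exact zero_mem _
    · intro i'; rw [cp_zero]; exact zero_mem _
    · intro y z hy hz i'; rw [cp_add]; exact add_mem (hy i') (hz i')
  · intro h
    refine le_antisymm ?_ (iSup_le fun i => inf_le_left)
    intro x hx
    rw [← sum_cp f x]
    refine Submodule.sum_mem _ fun i _ => ?_
    exact Submodule.mem_iSup_of_mem i ⟨h x hx i, cp_mem f i x⟩

end Stmt14Aux
namespace Stmt14Aux

variable {F B : Type*} [Field F] [AddCommGroup B] [Module F B]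

lemma mul_zl {mul : B → B → B} (hbil : IsBilinearMul F mul) (y : B) : mul 0 y = 0 := by
  have := hbil.2.2.1 (0 : F) 0 y; simpa using this

lemma mul_zr {mul : B → B → B} (hbil : IsBilinearMul F mul) (x : B) : mul x 0 = 0 := by
  have := hbil.2.2.2 (0 : F) x 0; simpa using this

lemma mul_suml {mul : B → B → B} (hbil : IsBilinearMul F mul) {α : Type*} (s : Finset α)
    (u : α → B) (y : B) : mul (∑ j ∈ s, u j) y = ∑ j ∈ s, mul (u j) y := by
  classical
  induction s using Finset.induction with
  | empty => simpa using mul_zl hbil y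
  | insert a s h ih => rw [Finset.sum_insert h, Finset.sum_insert h, hbil.1, ih]

lemma mul_sumr {mul : B → B → B} (hbil : IsBilinearMul F mul) {α : Type*} (s : Finset α)
    (u : α → B) (x : B) : mul x (∑ j ∈ s, u j) = ∑ j ∈ s, mul x (u j) := by
  classical
  induction s using Finset.induction with
  | empty => simpa using mul_zr hbil x
  | insert a s h ih => rw [Finset.sum_insert h, Finset.sum_insert h, hbil.2.1, ih]

/-- The two-sided annihilator of `M` in `B`. -/
def annIn (mul : B → B → B) (hbil : IsBilinearMul F mul) (M : Submodule F B) :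
    Submodule F B where
  carrier := {x | ∀ y ∈ M, mul x y = 0 ∧ mul y x = 0}
  add_mem' := by
    intro a b ha hb y hy
    obtain ⟨h1, h2⟩ := ha y hy
    obtain ⟨h3, h4⟩ := hb y hy
    exact ⟨by rw [hbil.1, h1, h3, add_zero], by rw [hbil.2.1, h2, h4, add_zero]⟩
  zero_mem' := fun y _ => ⟨mul_zl hbil y, mul_zr hbil y⟩
  smul_mem' := by
    intro c a ha y hy
    obtain ⟨h1, h2⟩ := ha y hy
    exact ⟨by rw [hbil.2.2.1, h1, smul_zero], by rw [hbil.2.2.2, h2, smul_zero]⟩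

lemma mem_annIn {mul : B → B → B} {hbil : IsBilinearMul F mul} {M : Submodule F B} {x : B} :
    x ∈ annIn mul hbil M ↔ ∀ y ∈ M, mul x y = 0 ∧ mul y x = 0 := Iff.rfl

end Stmt14Aux
/-- a semisimple `G`-graded algebra is the direct sum of graded ideals which are
graded-simple and semisimple, and the graded-simple factors are uniquely determined up to
reordering. -/
theorem stmt_14 {F B : Type*} [Field F] [AddCommGroup B] [Module F B]
    {G : Type*} [AddCommGroup G] [DecidableEq G]
    (mul : B → B → B) (hbil : IsBilinearMul F mul)
    (𝒜 : G → Submodule F B) (hint : DirectSum.IsInternal 𝒜)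
    (hgmul : ∀ g h : G, ∀ x ∈ 𝒜 g, ∀ y ∈ 𝒜 h, mul x y ∈ 𝒜 (g + h))
    (hss : IsSemisimpleOn mul (⊤ : Submodule F B)) :
    ∃ (n : ℕ) (J : Fin n → Submodule F B),
      iSupIndep J ∧ (⨆ i, J i) = ⊤ ∧
      (∀ i, IsIdealIn mul ⊤ (J i) ∧ IsGradedSubmoduleFam 𝒜 (J i) ∧
        IsSemisimpleOn mul (J i) ∧
        (∃ x ∈ J i, ∃ y ∈ J i, mul x y ≠ 0) ∧
        (∀ I : Submodule F B, IsIdealIn mul (J i) I → IsGradedSubmoduleFam 𝒜 I →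
          I = ⊥ ∨ I = J i)) ∧
      (∀ (n' : ℕ) (J' : Fin n' → Submodule F B),
        iSupIndep J' → (⨆ i, J' i) = ⊤ →
        (∀ i, IsIdealIn mul ⊤ (J' i) ∧ IsGradedSubmoduleFam 𝒜 (J' i) ∧
          (∃ x ∈ J' i, ∃ y ∈ J' i, mul x y ≠ 0) ∧
          (∀ I : Submodule F B, IsIdealIn mul (J' i) I → IsGradedSubmoduleFam 𝒜 I →
            I = ⊥ ∨ I = J' i)) →
        ∃ e : Fin n' ≃ Fin n, ∀ i, J' i = J (e i)) := by
  classical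
  open Stmt14Aux in
  obtain ⟨m, S, hSind, hSsup, hSprop⟩ := hss
  letI dA : DirectSum.Decomposition 𝒜 := hint.chooseDecomposition
  letI dS : DirectSum.Decomposition S :=
    (DirectSum.isInternal_submodule_of_iSupIndep_of_iSup_eq_top hSind hSsup).chooseDecomposition
  -- basic facts
  have SId : ∀ k, IsIdealIn mul ⊤ (S k) := fun k => (hSprop k).1
  have mulII : ∀ I I' : Submodule F B, IsIdealIn mul ⊤ I → IsIdealIn mul ⊤ I' →
      ∀ x ∈ I, ∀ y ∈ I', mul x y ∈ I ⊓ I' := fun I I' hI hI' x hx y hy =>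
    ⟨(hI.2 x hx y Submodule.mem_top).2, (hI'.2 y hy x Submodule.mem_top).1⟩
  have Sdisj : ∀ {k j : Fin m}, k ≠ j → ∀ x, x ∈ S k → x ∈ S j → x = 0 := by
    intro k j hkj x hxk hxj
    exact Submodule.disjoint_def.mp (hSind.pairwiseDisjoint hkj) x hxk hxj
  have Sne : ∀ k, S k ≠ ⊥ := by
    intro k hbot
    obtain ⟨x, hx, y, hy, hne⟩ := (hSprop k).2.1
    rw [hbot, Submodule.mem_bot] at hx
    exact hne (hx ▸ mul_zl hbil y)
  -- zero annihilator in each simple ideal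
  have zeroAnn : ∀ k : Fin m, ∀ y ∈ S k, (∀ s ∈ S k, mul s y = 0 ∧ mul y s = 0) → y = 0 := by
    intro k y hy hann
    have hZid : IsIdealIn mul (S k) (S k ⊓ annIn mul hbil (S k)) := by
      refine ⟨inf_le_left, ?_⟩
      intro x hx a ha
      constructor
      · have h1 : mul a x = 0 := (hx.2 a ha).2
        rw [h1]; exact zero_mem _
      · have h1 : mul x a = 0 := (hx.2 a ha).1
        rw [h1]; exact zero_mem _
    rcases (hSprop k).2.2 _ hZid with hbot | htop
    · have : y ∈ S k ⊓ annIn mul hbil (S k) :=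
        ⟨hy, fun s hs => ⟨(hann s hs).2, (hann s hs).1⟩⟩
      rw [hbot, Submodule.mem_bot] at this
      exact this
    · exfalso
      obtain ⟨x, hx, y', hy', hne⟩ := (hSprop k).2.1
      have : y' ∈ S k ⊓ annIn mul hbil (S k) := by rw [htop]; exact hy'
      exact hne ((this.2 x hx).2)
  -- multiplying by an element of S k only sees the k-component
  have mulScp : ∀ (k : Fin m) (s : B), s ∈ S k → ∀ x : B,
      mul s x = mul s (cp S k x) ∧ mul x s = mul (cp S k x) s := by
    intro k s hs x
    have hzero : ∀ j ∈ (DirectSum.decompose S x).support, j ≠ k →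
        mul s (cp S j x) = 0 ∧ mul (cp S j x) s = 0 := by
      intro j _ hjk
      have h1 := mulII (S k) (S j) (SId k) (SId j) s hs _ (cp_mem S j x)
      have h2 := mulII (S j) (S k) (SId j) (SId k) _ (cp_mem S j x) s hs
      exact ⟨Sdisj (Ne.symm hjk) _ h1.1 h1.2, Sdisj hjk _ h2.1 h2.2⟩
    constructor
    · conv_lhs => rw [← sum_cp S x]
      rw [mul_sumr hbil]
      rw [Finset.sum_eq_single k (fun j hj hjk => (hzero j hj hjk).1)
        (fun hk => by rw [cp_of_not_mem_support S hk, mul_zr hbil])]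
    · conv_lhs => rw [← sum_cp S x]
      rw [mul_suml hbil]
      rw [Finset.sum_eq_single k (fun j hj hjk => (hzero j hj hjk).2)
        (fun hk => by rw [cp_of_not_mem_support S hk, mul_zl hbil])]
  -- components (w.r.t. S) of an ideal lie in the ideal
  have cpI : ∀ I : Submodule F B, IsIdealIn mul ⊤ I → ∀ x ∈ I, ∀ k, cp S k x ∈ I := by
    intro I hI x hx k
    have hIk : IsIdealIn mul (S k) (I ⊓ S k) := by
      refine ⟨inf_le_right, ?_⟩
      intro y hy a ha
      constructor
      · exact ⟨(hI.2 y hy.1 a Submodule.mem_top).1,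
          ((SId k).2 a ha y Submodule.mem_top).2⟩
      · exact ⟨(hI.2 y hy.1 a Submodule.mem_top).2,
          ((SId k).2 a ha y Submodule.mem_top).1⟩
    rcases (hSprop k).2.2 _ hIk with hbot | htop
    · have hz : cp S k x = 0 := by
        refine zeroAnn k _ (cp_mem S k x) ?_
        intro s hs
        have h1 : mul s (cp S k x) = mul s x := ((mulScp k s hs x).1).symm
        have h2 : mul (cp S k x) s = mul x s := ((mulScp k s hs x).2).symm
        have m1 : mul s x ∈ I ⊓ S k := by
          have := mulII (S k) I (SId k) hI s hs x hx
          exact ⟨this.2, this.1⟩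
        have m2 : mul x s ∈ I ⊓ S k := mulII I (S k) hI (SId k) x hx s hs
        rw [hbot, Submodule.mem_bot] at m1 m2
        exact ⟨h1 ▸ m1, h2 ▸ m2⟩
      rw [hz]; exact zero_mem _
    · have : cp S k x ∈ I ⊓ S k := by rw [htop]; exact cp_mem S k x
      exact this.1
  -- if S k is not inside an ideal I then I ⊓ S k = ⊥
  have infSk : ∀ I : Submodule F B, IsIdealIn mul ⊤ I → ∀ k, ¬ S k ≤ I → I ⊓ S k = ⊥ := by
    intro I hI k hk
    have hIk : IsIdealIn mul (S k) (I ⊓ S k) := by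
      refine ⟨inf_le_right, ?_⟩
      intro y hy a ha
      exact ⟨⟨(hI.2 y hy.1 a Submodule.mem_top).1, ((SId k).2 a ha y Submodule.mem_top).2⟩,
        ⟨(hI.2 y hy.1 a Submodule.mem_top).2, ((SId k).2 a ha y Submodule.mem_top).1⟩⟩
    rcases (hSprop k).2.2 _ hIk with hbot | htop
    · exact hbot
    · exact absurd (htop ▸ inf_le_left : S k ≤ I) hk
  -- ideal structure: every ideal is the sum of the simple ideals it contains
  have idealKset : ∀ I : Submodule F B, IsIdealIn mul ⊤ I →
      I = ⨆ k ∈ {k : Fin m | S k ≤ I}, S k := by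
    intro I hI
    refine le_antisymm ?_ (iSup₂_le fun k hk => hk)
    intro x hx
    refine mem_biSup_of_cp S _ ?_
    intro j hj
    have h1 : cp S j x ∈ I ⊓ S j := ⟨cpI I hI x hx j, cp_mem S j x⟩
    rw [infSk I hI j hj, Submodule.mem_bot] at h1
    exact h1
  have exS : ∀ I : Submodule F B, IsIdealIn mul ⊤ I → I ≠ ⊥ → ∃ l, S l ≤ I := by
    intro I hI hne
    by_contra h
    push_neg at h
    apply hne
    rw [idealKset I hI]
    have he : {k : Fin m | S k ≤ I} = ∅ := Set.eq_empty_iff_forall_notMem.mpr h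
    rw [he]
    simp
  -- sums of simple ideals are ideals
  have bSupIdeal : ∀ A : Set (Fin m), IsIdealIn mul ⊤ (⨆ k ∈ A, S k) := by
    intro A
    refine ⟨le_top, ?_⟩
    intro x hx
    refine Submodule.iSup_induction (fun k => ⨆ _ : k ∈ A, S k)
      (motive := fun y => ∀ a ∈ (⊤ : Submodule F B), mul a y ∈ (⨆ k ∈ A, S k) ∧
        mul y a ∈ (⨆ k ∈ A, S k)) hx ?_ ?_ ?_
    · intro k y hy a _
      have hy' : y ∈ ⨆ _ : k ∈ A, S k := hy
      by_cases hk : k ∈ A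
      · rw [iSup_pos hk] at hy'
        have h1 : mul a y ∈ S k := ((SId k).2 y hy' a Submodule.mem_top).1
        have h2 : mul y a ∈ S k := ((SId k).2 y hy' a Submodule.mem_top).2
        exact ⟨Submodule.mem_iSup_of_mem k (Submodule.mem_iSup_of_mem hk h1),
          Submodule.mem_iSup_of_mem k (Submodule.mem_iSup_of_mem hk h2)⟩
      · rw [iSup_neg hk, Submodule.mem_bot] at hy'
        rw [hy', mul_zr hbil, mul_zl hbil]
        exact ⟨zero_mem _, zero_mem _⟩
    · intro a _
      rw [mul_zr hbil, mul_zl hbil]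
      exact ⟨zero_mem _, zero_mem _⟩
    · intro y z hy hz a ha
      rw [hbil.2.1, hbil.1]
      exact ⟨add_mem (hy a ha).1 (hz a ha).1, add_mem (hy a ha).2 (hz a ha).2⟩
  -- graded characterization via components
  have gr_def : ∀ P : Submodule F B, IsGradedSubmoduleFam 𝒜 P ↔
      ∀ x ∈ P, ∀ g, cp 𝒜 g x ∈ P := by
    intro P
    unfold IsGradedSubmoduleFam
    exact graded_iff 𝒜 P
  have htopg : IsGradedSubmoduleFam 𝒜 (⊤ : Submodule F B) :=
    (gr_def ⊤).mpr fun x _ g => Submodule.mem_top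
  -- component of a product, on each side
  have Acpl : ∀ (x y : B) (g h : G), y ∈ 𝒜 h →
      cp 𝒜 (g + h) (mul x y) = mul (cp 𝒜 g x) y := by
    intro x y g h hy
    conv_lhs => rw [← sum_cp 𝒜 x, mul_suml hbil, cp_finset_sum]
    rw [Finset.sum_eq_single g
      (fun g' _ hg' => cp_of_mem_ne 𝒜 (hgmul g' h _ (cp_mem 𝒜 g' x) _ hy)
        (fun hEq => hg' (add_right_cancel hEq)))
      (fun hg => by rw [cp_of_not_mem_support 𝒜 hg, mul_zl hbil, cp_zero])]
    exact cp_of_mem_same 𝒜 (hgmul g h _ (cp_mem 𝒜 g x) _ hy)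
  have Acpr : ∀ (x y : B) (g h : G), x ∈ 𝒜 h →
      cp 𝒜 (h + g) (mul x y) = mul x (cp 𝒜 g y) := by
    intro x y g h hx
    conv_lhs => rw [← sum_cp 𝒜 y, mul_sumr hbil, cp_finset_sum]
    rw [Finset.sum_eq_single g
      (fun g' _ hg' => cp_of_mem_ne 𝒜 (hgmul h g' _ hx _ (cp_mem 𝒜 g' y))
        (fun hEq => hg' (add_left_cancel hEq)))
      (fun hg => by rw [cp_of_not_mem_support 𝒜 hg, mul_zr hbil, cp_zero])]
    exact cp_of_mem_same 𝒜 (hgmul h g _ hx _ (cp_mem 𝒜 g y))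
  -- the annihilator of a graded submodule is graded
  have annGr : ∀ M : Submodule F B, IsGradedSubmoduleFam 𝒜 M →
      ∀ x ∈ annIn mul hbil M, ∀ g, cp 𝒜 g x ∈ annIn mul hbil M := by
    intro M hM x hx g
    intro y hy
    have hy' : y ∈ ⨆ h, M ⊓ 𝒜 h := by rw [← hM]; exact hy
    refine Submodule.iSup_induction (fun h => M ⊓ 𝒜 h)
      (motive := fun z => mul (cp 𝒜 g x) z = 0 ∧ mul z (cp 𝒜 g x) = 0) hy' ?_ ?_ ?_
    · intro h z hz
      have hz' : z ∈ M ⊓ 𝒜 h := hz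
      constructor
      · rw [← Acpl x z g h hz'.2, (hx z hz'.1).1, cp_zero]
      · rw [← Acpr z x g h hz'.2, (hx z hz'.1).2, cp_zero]
    · exact ⟨mul_zr hbil _, mul_zl hbil _⟩
    · intro z w hz hw
      rw [hbil.2.1, hbil.1, hz.1, hw.1, hz.2, hw.2, add_zero]
      exact ⟨rfl, rfl⟩
  -- M ⊓ ann M = ⊥ for ideals M
  have annInf : ∀ M : Submodule F B, IsIdealIn mul ⊤ M → M ⊓ annIn mul hbil M = ⊥ := by
    intro M hM
    rw [eq_bot_iff]
    intro x hx
    rw [Submodule.mem_bot]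
    refine eq_zero_of_cp S ?_
    intro k
    by_cases hk : S k ≤ M
    · refine zeroAnn k _ (cp_mem S k x) ?_
      intro s hs
      have h1 := (mulScp k s hs x).1
      have h2 := (mulScp k s hs x).2
      exact ⟨h1 ▸ (hx.2 s (hk hs)).2, h2 ▸ (hx.2 s (hk hs)).1⟩
    · have : cp S k x ∈ M ⊓ S k := ⟨cpI M hM x hx.1 k, cp_mem S k x⟩
      rw [infSk M hM k hk, Submodule.mem_bot] at this
      exact this
  -- ann M is the sum of the simple ideals outside M
  have annEq : ∀ M : Submodule F B, IsIdealIn mul ⊤ M →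
      annIn mul hbil M = ⨆ k ∈ {k : Fin m | ¬ S k ≤ M}, S k := by
    intro M hM
    set N := ⨆ k ∈ {k : Fin m | ¬ S k ≤ M}, S k with hN
    have hNle : N ≤ annIn mul hbil M := by
      refine iSup₂_le ?_
      intro k hk y hy z hz
      have h1 := mulII (S k) M (SId k) hM y hy z hz
      have h2 := mulII M (S k) hM (SId k) z hz y hy
      have hbot : M ⊓ S k = ⊥ := infSk M hM k hk
      constructor
      · have : mul y z ∈ M ⊓ S k := ⟨h1.2, h1.1⟩
        rw [hbot, Submodule.mem_bot] at this; exact this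
      · have : mul z y ∈ M ⊓ S k := ⟨h2.1, h2.2⟩
        rw [hbot, Submodule.mem_bot] at this; exact this
    have hsup : N ⊔ M = ⊤ := by
      rw [eq_top_iff, ← hSsup]
      refine iSup_le fun k => ?_
      by_cases hk : S k ≤ M
      · exact le_sup_of_le_right hk
      · exact le_sup_of_le_left (le_iSup₂ (f := fun k _ => S k) k hk)
    have hmod := sup_inf_assoc_of_le (x := N) M hNle
    rw [hsup, top_inf_eq, annInf M hM, sup_bot_eq] at hmod
    exact hmod
  -- the collection of minimal graded ideals
  set fam : Fin m → Set (Submodule F B) := fun k =>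
    {I | IsIdealIn mul ⊤ I ∧ IsGradedSubmoduleFam 𝒜 I ∧ S k ≤ I} with hfam
  set Cd : Fin m → Submodule F B := fun k => sInf (fam k) with hCd
  have Cideal : ∀ k, IsIdealIn mul ⊤ (Cd k) := by
    intro k
    refine ⟨le_top, ?_⟩
    intro x hx a _
    constructor
    · refine Submodule.mem_sInf.mpr fun I hI => ?_
      exact (hI.1.2 x (Submodule.mem_sInf.mp hx I hI) a Submodule.mem_top).1
    · refine Submodule.mem_sInf.mpr fun I hI => ?_
      exact (hI.1.2 x (Submodule.mem_sInf.mp hx I hI) a Submodule.mem_top).2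
  have Cgraded : ∀ k, IsGradedSubmoduleFam 𝒜 (Cd k) := by
    intro k
    refine (gr_def _).mpr fun x hx g => ?_
    refine Submodule.mem_sInf.mpr fun I hI => ?_
    exact (gr_def I).mp hI.2.1 x (Submodule.mem_sInf.mp hx I hI) g
  have SleC : ∀ k, S k ≤ Cd k := fun k => le_sInf fun I hI => hI.2.2
  have Cle : ∀ k (I : Submodule F B), IsIdealIn mul ⊤ I → IsGradedSubmoduleFam 𝒜 I →
      S k ≤ I → Cd k ≤ I := fun k I h1 h2 h3 => sInf_le ⟨h1, h2, h3⟩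
  have Cne : ∀ k, Cd k ≠ ⊥ := by
    intro k hbot
    exact Sne k (le_bot_iff.mp (hbot ▸ SleC k))
  -- symmetry: if S l ≤ Cd k then Cd k = Cd l
  have Csymm : ∀ k l, S l ≤ Cd k → Cd k = Cd l := by
    intro k l hlk
    have h1 : Cd l ≤ Cd k := Cle l _ (Cideal k) (Cgraded k) hlk
    have h2 : S k ≤ Cd l := by
      by_contra hk
      set N := annIn mul hbil (Cd l) with hNdef
      have hNideal : IsIdealIn mul ⊤ N := by
        rw [hNdef, annEq _ (Cideal l)]; exact bSupIdeal _
      have hNgraded : IsGradedSubmoduleFam 𝒜 N :=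
        (gr_def N).mpr (annGr _ (Cgraded l))
      have hSkN : S k ≤ N := by
        rw [hNdef, annEq _ (Cideal l)]
        exact le_iSup₂ (f := fun k _ => S k) k hk
      have hCkN : Cd k ≤ N := Cle k N hNideal hNgraded hSkN
      have : S l ≤ Cd l ⊓ N := le_inf (SleC l) (le_trans hlk hCkN)
      rw [annInf _ (Cideal l)] at this
      exact Sne l (le_bot_iff.mp this)
    exact le_antisymm (Cle k _ (Cideal l) (Cgraded l) h2) h1
  -- an ideal of Cd k is an ideal of B
  have idealOfC : ∀ k (I : Submodule F B), IsIdealIn mul (Cd k) I → IsIdealIn mul ⊤ I := by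
    intro k I hI
    refine ⟨le_top, ?_⟩
    intro x hx a _
    have key : ∀ j : Fin m, mul (cp S j a) x ∈ I ∧ mul x (cp S j a) ∈ I := by
      intro j
      by_cases hj : S j ≤ Cd k
      · exact hI.2 x hx _ (hj (cp_mem S j a))
      · have h1 : mul (cp S j a) x ∈ S j ⊓ Cd k := by
          have := mulII (S j) (Cd k) (SId j) (Cideal k) _ (cp_mem S j a) x (hI.1 hx)
          exact this
        have h2 : mul x (cp S j a) ∈ S j ⊓ Cd k := by
          have := mulII (Cd k) (S j) (Cideal k) (SId j) x (hI.1 hx) _ (cp_mem S j a)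
          exact ⟨this.2, this.1⟩
        have hbot : S j ⊓ Cd k = ⊥ := by
          rw [inf_comm]; exact infSk _ (Cideal k) j hj
        rw [hbot, Submodule.mem_bot] at h1 h2
        rw [h1, h2]
        exact ⟨zero_mem _, zero_mem _⟩
    constructor
    · have : mul a x = ∑ j ∈ (DirectSum.decompose S a).support, mul (cp S j a) x := by
        conv_lhs => rw [← sum_cp S a, mul_suml hbil]
      rw [this]
      exact Submodule.sum_mem _ fun j _ => (key j).1
    · have : mul x a = ∑ j ∈ (DirectSum.decompose S a).support, mul x (cp S j a) := by
        conv_lhs => rw [← sum_cp S a, mul_sumr hbil]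
      rw [this]
      exact Submodule.sum_mem _ fun j _ => (key j).2
  -- graded simplicity of Cd k
  have gsimpleC : ∀ k (I : Submodule F B), IsIdealIn mul (Cd k) I →
      IsGradedSubmoduleFam 𝒜 I → I = ⊥ ∨ I = Cd k := by
    intro k I hI hIg
    by_cases hbot : I = ⊥
    · exact Or.inl hbot
    right
    have hItop : IsIdealIn mul ⊤ I := idealOfC k I hI
    obtain ⟨l, hl⟩ := exS I hItop hbot
    have h1 : Cd l ≤ I := Cle l I hItop hIg hl
    have h2 : Cd k = Cd l := Csymm k l (le_trans hl hI.1)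
    exact le_antisymm hI.1 (h2 ▸ h1)
  -- any graded-simple graded ideal equals Cd l for any S l it contains
  have uniqC : ∀ P : Submodule F B, IsIdealIn mul ⊤ P → IsGradedSubmoduleFam 𝒜 P →
      (∀ I : Submodule F B, IsIdealIn mul P I → IsGradedSubmoduleFam 𝒜 I →
        I = ⊥ ∨ I = P) → ∀ l, S l ≤ P → P = Cd l := by
    intro P hP hPg hPsimple l hl
    have h1 : Cd l ≤ P := Cle l P hP hPg hl
    have h2 : IsIdealIn mul P (Cd l) := by
      refine ⟨h1, ?_⟩
      intro x hx a _
      exact (Cideal l).2 x hx a Submodule.mem_top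
    rcases hPsimple _ h2 (Cgraded l) with hb | he
    · exact absurd hb (Cne l)
    · exact he.symm
  -- assemble the decomposition
  set 𝒥 : Finset (Submodule F B) := Finset.image Cd Finset.univ with h𝒥
  set e0 := 𝒥.equivFin with he0
  have Jspec : ∀ i, ∃ k, ((e0.symm i : 𝒥) : Submodule F B) = Cd k := by
    intro i
    obtain ⟨k, _, hk⟩ := Finset.mem_image.mp (e0.symm i).2
    exact ⟨k, hk.symm⟩
  have Jinj : ∀ i j, ((e0.symm i : 𝒥) : Submodule F B) = ((e0.symm j : 𝒥) : Submodule F B) →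
      i = j := by
    intro i j hij
    have := e0.symm.injective (Subtype.ext hij)
    exact this
  refine ⟨𝒥.card, fun i => ((e0.symm i : 𝒥) : Submodule F B), ?_, ?_, ?_, ?_⟩
  · -- independence
    intro i
    obtain ⟨k, hk⟩ := Jspec i
    set A : Set (Fin m) := {l | S l ≤ Cd k} with hA
    have hW : (⨆ (j) (_ : j ≠ i), ((e0.symm j : 𝒥) : Submodule F B)) ≤ ⨆ l ∈ Aᶜ, S l := by
      refine iSup₂_le fun j hj => ?_
      obtain ⟨k', hk'⟩ := Jspec j
      rw [hk']
      conv_lhs => rw [idealKset (Cd k') (Cideal k')]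
      refine iSup₂_le fun l hl => ?_
      refine le_iSup₂ (f := fun l _ => S l) l ?_
      intro hlA
      have e1 : Cd k = Cd l := Csymm k l hlA
      have e2 : Cd k' = Cd l := Csymm k' l hl
      exact hj (Jinj j i (by rw [hk, hk', e1, e2]))
    refine Disjoint.mono_right hW ?_
    have hk2 : (fun i => ((e0.symm i : 𝒥) : Submodule F B)) i = Cd k := hk
    rw [hk2, Submodule.disjoint_def]
    intro x hxC hxW
    refine eq_zero_of_cp S fun l => ?_
    by_cases hlA : l ∈ A
    · exact cp_eq_zero_of_mem_biSup S Aᶜ hxW l (fun hc => hc hlA)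
    · have hxC' : x ∈ ⨆ l ∈ A, S l := by
        rw [← idealKset (Cd k) (Cideal k)]; exact hxC
      exact cp_eq_zero_of_mem_biSup S A hxC' l hlA
  · -- sup is top
    rw [eq_top_iff, ← hSsup]
    refine iSup_le fun k => ?_
    have hmem : Cd k ∈ 𝒥 := Finset.mem_image.mpr ⟨k, Finset.mem_univ k, rfl⟩
    have hval : ((e0.symm (e0 ⟨Cd k, hmem⟩) : 𝒥) : Submodule F B) = Cd k := by
      rw [Equiv.symm_apply_apply]
    refine le_trans (SleC k) ?_
    have h2 := le_iSup (fun i => ((e0.symm i : 𝒥) : Submodule F B)) (e0 ⟨Cd k, hmem⟩)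
    rw [hval] at h2
    exact h2
  · -- properties of each factor
    intro i
    obtain ⟨k, hk⟩ := Jspec i
    have hk2 : (fun i => ((e0.symm i : 𝒥) : Submodule F B)) i = Cd k := hk
    rw [hk2]
    refine ⟨Cideal k, Cgraded k, ?_, ?_, gsimpleC k⟩
    · -- semisimple
      set As : Finset (Fin m) := Finset.univ.filter (fun l => S l ≤ Cd k) with hAs
      refine ⟨As.card, fun i2 => S ((As.equivFin.symm i2 : As) : Fin m), ?_, ?_, ?_⟩
      · have hinj : Function.Injective
            (fun i2 : Fin As.card => ((As.equivFin.symm i2 : As) : Fin m)) :=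
          fun a b hab => As.equivFin.symm.injective (Subtype.ext hab)
        exact hSind.comp hinj
      · refine le_antisymm (iSup_le fun i2 => ?_) ?_
        · have h2 : ((As.equivFin.symm i2 : As) : Fin m) ∈ As := (As.equivFin.symm i2).2
          exact (Finset.mem_filter.mp h2).2
        · conv_lhs => rw [idealKset (Cd k) (Cideal k)]
          refine iSup₂_le fun l hl => ?_
          have hmem : l ∈ As := by rw [hAs, Finset.mem_filter]; exact ⟨Finset.mem_univ l, hl⟩
          have h3 := le_iSup (fun i2 => S ((As.equivFin.symm i2 : As) : Fin m))
            (As.equivFin ⟨l, hmem⟩)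
          rw [Equiv.symm_apply_apply] at h3
          exact h3
      · intro i2
        have h2 : ((As.equivFin.symm i2 : As) : Fin m) ∈ As := (As.equivFin.symm i2).2
        have h2' := (Finset.mem_filter.mp h2).2
        refine ⟨⟨h2', ?_⟩, (hSprop _).2⟩
        intro x hx a _
        exact ⟨((SId _).2 x hx a Submodule.mem_top).1, ((SId _).2 x hx a Submodule.mem_top).2⟩
    · -- nonzero product
      obtain ⟨x, hx, y, hy, hne⟩ := (hSprop k).2.1
      exact ⟨x, SleC k hx, y, SleC k hy, hne⟩
  · -- uniqueness
    intro n' J' hind' hsup' hprop'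
    have Jne : ∀ i', J' i' ≠ ⊥ := by
      intro i' hbot
      obtain ⟨x, hx, y, hy, hne⟩ := (hprop' i').2.2.1
      rw [hbot, Submodule.mem_bot] at hx
      exact hne (hx ▸ mul_zl hbil y)
    have hJC : ∀ i', ∃ k, J' i' = Cd k := by
      intro i'
      obtain ⟨l, hl⟩ := exS _ (hprop' i').1 (Jne i')
      exact ⟨l, uniqC _ (hprop' i').1 (hprop' i').2.1 (hprop' i').2.2.2 l hl⟩
    have hmemJ : ∀ i', J' i' ∈ 𝒥 := by
      intro i'
      obtain ⟨k, hk⟩ := hJC i'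
      exact Finset.mem_image.mpr ⟨k, Finset.mem_univ k, hk.symm⟩
    set φ : Fin n' → 𝒥 := fun i' => ⟨J' i', hmemJ i'⟩ with hφ
    have φinj : Function.Injective φ := by
      intro i j hij
      by_contra hne
      have hval : J' i = J' j := congrArg Subtype.val hij
      have h1 : J' i ≤ ⨆ (j') (_ : j' ≠ i), J' j' := by
        rw [hval]
        have hji : j ≠ i := fun h => hne h.symm
        exact le_iSup₂ (f := fun (j' : Fin n') (_ : j' ≠ i) => J' j') j hji
      exact Jne i (le_bot_iff.mp (le_trans (le_inf le_rfl h1) (hind' i).le_bot))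
    have φsurj : Function.Surjective φ := by
      intro b
      obtain ⟨k, _, hbk⟩ := Finset.mem_image.mp b.2
      have hex : ∃ i', S k ≤ J' i' := by
        by_contra hc
        push_neg at hc
        have hW : (⊤ : Submodule F B) ≤ ⨆ l ∈ {l : Fin m | l ≠ k}, S l := by
          rw [← hsup']
          refine iSup_le fun i' => ?_
          conv_lhs => rw [idealKset _ (hprop' i').1]
          refine iSup₂_le fun l hl => ?_
          exact le_iSup₂ (f := fun (l : Fin m) (_ : l ≠ k) => S l) l
            (fun he => hc i' (by rw [← he]; exact hl))
        obtain ⟨x, hxS, hxne⟩ := (Submodule.ne_bot_iff _).mp (Sne k)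
        have hx2 : x ∈ ⨆ l ∈ {l : Fin m | l ≠ k}, S l := hW Submodule.mem_top
        have hz := cp_eq_zero_of_mem_biSup S _ hx2 k (fun h => h rfl)
        rw [cp_of_mem_same S hxS] at hz
        exact hxne hz
      obtain ⟨i', hi'⟩ := hex
      have heq : J' i' = Cd k :=
        uniqC _ (hprop' i').1 (hprop' i').2.1 (hprop' i').2.2.2 k hi'
      exact ⟨i', Subtype.ext (heq.trans hbk)⟩
    refine ⟨(Equiv.ofBijective φ ⟨φinj, φsurj⟩).trans e0, ?_⟩
    intro i'
    show J' i' = ((e0.symm (e0 (φ i')) : 𝒥) : Submodule F B)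
    rw [Equiv.symm_apply_apply]
end

section
/- Let an algebra B be the direct sum of graded ideals B¹,…,Bⁿ with respect to a fine grading Γ (a grading admitting no proper refinement). Then each induced grading Γⁱ = Γ|_{Bⁱ} is fine, and Γ is equivalent to the product grading Γ¹ × ⋯ × Γⁿ on B¹ × ⋯ × Bⁿ. Conversely, if each Γⁱ is a fine grading on Bⁱ, then the product grading Γ¹ × ⋯ × Γⁿ is fine on B¹ × ⋯ × Bⁿ. -/
section Helpers
variable {F B : Type*} [Field F] [AddCommGroup B] [Module F B]

lemma modular_inf_eq {a b c : Submodule F B} (hac : a ≤ c) (hcb : Disjoint c b) :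
    c ⊓ (a ⊔ b) = a := by
  rw [sup_comm, ← inf_sup_assoc_of_le b hac, disjoint_iff.1 hcb, bot_sup_eq]

lemma modular_disjoint {S a b c : Submodule F B} (hSc : S ≤ c) (hac : a ≤ c)
    (hSa : Disjoint S a) (hcb : Disjoint c b) : Disjoint S (a ⊔ b) := by
  rw [disjoint_iff] at hSa ⊢
  have h1 : S ⊓ (a ⊔ b) ≤ a := by
    calc S ⊓ (a ⊔ b) ≤ c ⊓ (a ⊔ b) := inf_le_inf_right _ hSc
    _ = a := modular_inf_eq hac hcb
  exact le_bot_iff.1 (le_trans (le_inf inf_le_left h1) hSa.le)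

lemma proj_filter {ι : Type*} (s : Finset ι) (y : ι → B) (P : ι → Prop) [DecidablePred P]
    {U D : Submodule F B} (hdisj : Disjoint U D)
    (hx : (∑ p ∈ s, y p) ∈ U)
    (hin : ∀ p ∈ s, P p → y p ∈ U)
    (hout : ∀ p ∈ s, ¬ P p → y p ∈ D) :
    ∑ p ∈ s.filter P, y p = ∑ p ∈ s, y p := by
  have hsplit := Finset.sum_filter_add_sum_filter_not s P y
  have ha : (∑ p ∈ s.filter P, y p) ∈ U :=
    Submodule.sum_mem _ fun p hp =>
      hin p (Finset.mem_filter.1 hp).1 (Finset.mem_filter.1 hp).2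
  have hb : (∑ p ∈ s.filter (fun p => ¬ P p), y p) ∈ D :=
    Submodule.sum_mem _ fun p hp =>
      hout p (Finset.mem_filter.1 hp).1 (Finset.mem_filter.1 hp).2
  have hbU : (∑ p ∈ s.filter (fun p => ¬ P p), y p) ∈ U := by
    have heq : (∑ p ∈ s.filter (fun p => ¬ P p), y p)
        = (∑ p ∈ s, y p) - (∑ p ∈ s.filter P, y p) := by
      rw [← hsplit]; abel
    rw [heq]; exact Submodule.sub_mem _ hx ha
  have h0 : (∑ p ∈ s.filter (fun p => ¬ P p), y p) = 0 :=
    Submodule.disjoint_def.1 hdisj _ hbU hb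
  rw [← hsplit, h0, add_zero]

lemma mem_sSup_extract {s : Set (Submodule F B)} {x : B} (hx : x ∈ sSup s) :
    ∃ (t : Finset ↥s) (y : ↥s → B), (∀ p : ↥s, y p ∈ p.1) ∧ ∑ p ∈ t, y p = x := by
  rw [sSup_eq_iSup' s, Submodule.mem_iSup_iff_exists_finsupp] at hx
  obtain ⟨f, hf, hsum⟩ := hx
  exact ⟨f.support, f, hf, by rwa [Finsupp.sum] at hsum⟩

end Helpers

section Stmt15Aux
variable {F B : Type*} [Field F] [AddCommGroup B] [Module F B]
variable {mul : B → B → B} {n : ℕ} {J : Fin n → Submodule F B}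

lemma J_disj (hindep : iSupIndep J) {i j : Fin n} (hij : i ≠ j) {x : B}
    (hxi : x ∈ J i) (hxj : x ∈ J j) : x = 0 := by
  have h : Disjoint (J i) (J j) :=
    (hindep i).mono_right (le_iSup₂ (f := fun k (_ : k ≠ i) => J k) j (Ne.symm hij))
  exact Submodule.disjoint_def.1 h x hxi hxj

lemma J_le_uniq (hindep : iSupIndep J) {S : Submodule F B} {i k : Fin n}
    (hS : S ≠ ⊥) (h1 : S ≤ J i) (h2 : S ≤ J k) : i = k := by
  by_contra hik
  exact hS ((Submodule.eq_bot_iff S).2 fun x hx => J_disj hindep hik (h1 hx) (h2 hx))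

lemma mul_memJ (hJid : ∀ i, IsIdealIn mul ⊤ (J i)) (i : Fin n) {x : B} (hx : x ∈ J i) (a : B) :
    mul x a ∈ J i ∧ mul a x ∈ J i := by
  have h := (hJid i).2 x hx a Submodule.mem_top
  exact ⟨h.2, h.1⟩

end Stmt15Aux

section Stmt15Part1
variable {F B : Type*} [Field F] [AddCommGroup B] [Module F B]
variable {mul : B → B → B} {n : ℕ} {J : Fin n → Submodule F B}

lemma stmt15_part1 (hJid : ∀ i, IsIdealIn mul ⊤ (J i)) (hindep : iSupIndep J)
    (hsup : (⨆ i, J i) = ⊤) (Γ : Set (Submodule F B))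
    (hfine : IsFineGradingOn mul ⊤ Γ)
    (hgr : ∀ i, (⨆ U ∈ Γ, U ⊓ J i) = J i) :
    (∀ i, IsFineGradingOn mul (J i) ((fun U => U ⊓ J i) '' Γ \ {⊥})) ∧
      Γ = ⋃ i, ((fun U => U ⊓ J i) '' Γ \ {⊥}) := by
  classical
  obtain ⟨hΓ, hmax⟩ := hfine
  set Γ'' : Set (Submodule F B) := ⋃ i, ((fun U => U ⊓ J i) '' Γ \ {⊥}) with hΓ''def
  have hdecode : ∀ S ∈ Γ'', (∃ i, ∃ U ∈ Γ, U ⊓ J i = S) ∧ S ≠ ⊥ := by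
    intro S hS
    rw [hΓ''def, Set.mem_iUnion] at hS
    obtain ⟨i, ⟨U, hU, hUS⟩, hSne⟩ := hS
    exact ⟨⟨i, U, hU, hUS⟩, by simpa using hSne⟩
  have hbuild : ∀ (i : Fin n), ∀ U ∈ Γ, U ⊓ J i ≠ ⊥ → U ⊓ J i ∈ Γ'' := by
    intro i U hU hne
    rw [hΓ''def, Set.mem_iUnion]
    exact ⟨i, ⟨U, hU, rfl⟩, by simpa using hne⟩
  -- Γ'' is a grading on ⊤
  have hE : IsGradingOn mul ⊤ Γ'' := by
    refine ⟨fun S hS => (hdecode S hS).2, fun S _ => le_top, ?_, ?_, ?_⟩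
    · -- indep
      intro S hS
      obtain ⟨⟨i, U, hU, hUS⟩, hSne⟩ := hdecode S hS
      rw [Submodule.disjoint_def]
      intro x hxS hxR
      obtain ⟨t, y, hy, hsum⟩ := mem_sSup_extract hxR
      have hdec2 : ∀ T : ↥(Γ'' \ {S}), ∃ j V, V ∈ Γ ∧ V ⊓ J j = T.1 := by
        intro T
        obtain ⟨⟨j, V, hV, hVT⟩, _⟩ := hdecode T.1 T.2.1
        exact ⟨j, V, hV, hVT⟩
      choose jf Vf hVmem hVeq using hdec2
      have hyVJ : ∀ p : ↥(Γ'' \ {S}), y p ∈ Vf p ⊓ J (jf p) := by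
        intro p; rw [hVeq p]; exact hy p
      have hxU : x ∈ U := by rw [← hUS] at hxS; exact hxS.1
      have hxJ : x ∈ J i := by rw [← hUS] at hxS; exact hxS.2
      have h1 : ∑ p ∈ t.filter (fun T => Vf T = U), y p = x := by
        rw [← hsum]
        refine proj_filter t y _ (hΓ.indep hU) (by rw [hsum]; exact hxU) ?_ ?_
        · intro p _ hp
          have := hyVJ p
          rw [hp] at this; exact this.1
        · intro p _ hp
          exact le_sSup (show Vf p ∈ Γ \ {U} from ⟨hVmem p, hp⟩) (hyVJ p).1
      have h2 : ∑ p ∈ (t.filter (fun T => Vf T = U)).filter (fun T => jf T = i), y p = x := by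
        rw [← h1]
        refine proj_filter _ y _ (hindep i) (by rw [h1]; exact hxJ) ?_ ?_
        · intro p _ hpi
          have := hyVJ p
          rw [hpi] at this; exact this.2
        · intro p _ hpi
          exact le_iSup₂ (f := fun j (_ : j ≠ i) => J j) (jf p) hpi (hyVJ p).2
      have hempty : (t.filter (fun T => Vf T = U)).filter (fun T => jf T = i) = ∅ := by
        rw [Finset.eq_empty_iff_forall_notMem]
        intro p hp
        obtain ⟨hp1, hp2⟩ := Finset.mem_filter.1 hp
        obtain ⟨-, hpV⟩ := Finset.mem_filter.1 hp1
        have hps : p.1 = S := by rw [← hVeq p, hpV, hp2, hUS]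
        exact p.2.2 hps
      rw [hempty] at h2
      simpa using h2.symm
    · -- total
      apply le_antisymm le_top
      rw [← hsup]
      refine iSup_le fun i => ?_
      rw [← hgr i]
      refine iSup₂_le fun U hU => ?_
      by_cases hb : U ⊓ J i = ⊥
      · rw [hb]; exact bot_le
      · exact le_sSup (hbuild i U hU hb)
    · -- mul_closed
      intro S hS T hT
      obtain ⟨⟨i, U, hU, hUS⟩, hSne⟩ := hdecode S hS
      obtain ⟨⟨j, V, hV, hVT⟩, hTne⟩ := hdecode T hT
      by_cases hij : i = j
      · subst hij
        obtain ⟨W, hW, hWmul⟩ := hΓ.mul_closed U hU V hV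
        by_cases hb : W ⊓ J i = ⊥
        · refine ⟨S, hS, fun u hu v hv => ?_⟩
          rw [← hUS] at hu; rw [← hVT] at hv
          have hz : mul u v = 0 := by
            have hm : mul u v ∈ W ⊓ J i :=
              ⟨hWmul u hu.1 v hv.1, (mul_memJ hJid i hu.2 v).1⟩
            rw [hb] at hm; simpa using hm
          rw [hz]; exact zero_mem _
        · refine ⟨W ⊓ J i, hbuild i W hW hb, fun u hu v hv => ?_⟩
          rw [← hUS] at hu; rw [← hVT] at hv
          exact ⟨hWmul u hu.1 v hv.1, (mul_memJ hJid i hu.2 v).1⟩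
      · refine ⟨S, hS, fun u hu v hv => ?_⟩
        rw [← hUS] at hu; rw [← hVT] at hv
        have h1 : mul u v ∈ J i := (mul_memJ hJid i hu.2 v).1
        have h2 : mul u v ∈ J j := (mul_memJ hJid j hv.2 u).2
        rw [J_disj hindep hij h1 h2]; exact zero_mem _
  have href : GradRefines Γ'' Γ := by
    intro S hS
    obtain ⟨⟨i, U, hU, hUS⟩, -⟩ := hdecode S hS
    exact ⟨U, hU, by rw [← hUS]; exact inf_le_left⟩
  have hEq : Γ'' = Γ := hmax Γ'' hE href
  -- characterization of the induced components
  have hchar : ∀ (i : Fin n) (S : Submodule F B),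
      S ∈ (fun U => U ⊓ J i) '' Γ \ {⊥} ↔ S ∈ Γ ∧ S ≤ J i := by
    intro i S
    constructor
    · intro hS
      have hS'' : S ∈ Γ'' := by rw [hΓ''def, Set.mem_iUnion]; exact ⟨i, hS⟩
      obtain ⟨⟨U, hU, hUS⟩, -⟩ := hS
      refine ⟨by rw [← hEq]; exact hS'', ?_⟩
      rw [← hUS]; exact inf_le_right
    · rintro ⟨hSΓ, hSle⟩
      refine ⟨⟨S, hSΓ, inf_eq_left.2 hSle⟩, ?_⟩
      simpa using hΓ.ne_bot S hSΓ
  have hsubΓ : ∀ i, ((fun U => U ⊓ J i) '' Γ \ {⊥}) ⊆ Γ :=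
    fun i S hS => ((hchar i S).1 hS).1
  have hhom : ∀ U ∈ Γ, ∃ k, U ≤ J k ∧ U ∈ (fun V => V ⊓ J k) '' Γ \ {⊥} := by
    intro U hU
    have hU'' : U ∈ Γ'' := by rw [hEq]; exact hU
    rw [hΓ''def, Set.mem_iUnion] at hU''
    obtain ⟨k, hk⟩ := hU''
    exact ⟨k, ((hchar k U).1 hk).2, hk⟩
  have hnotin : ∀ i, ∀ U ∈ Γ \ ((fun V => V ⊓ J i) '' Γ \ {⊥}),
      ∃ k, k ≠ i ∧ U ≤ J k := by
    intro i U hU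
    obtain ⟨k, hUk, hUmem⟩ := hhom U hU.1
    refine ⟨k, fun hki => ?_, hUk⟩
    exact hU.2 (hki ▸ hUmem)
  -- the induced grading on J i
  have hgrad_i : ∀ i, IsGradingOn mul (J i) ((fun U => U ⊓ J i) '' Γ \ {⊥}) := by
    intro i
    refine ⟨fun S hS => by simpa using hS.2, fun S hS => ((hchar i S).1 hS).2,
      hΓ.indep.mono (hsubΓ i), ?_, ?_⟩
    · apply le_antisymm (sSup_le fun S hS => ((hchar i S).1 hS).2)
      refine le_trans (le_of_eq (hgr i).symm) ?_
      refine iSup₂_le fun U hU => ?_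
      by_cases hb : U ⊓ J i = ⊥
      · rw [hb]; exact bot_le
      · refine le_sSup ⟨⟨U, hU, rfl⟩, by simpa using hb⟩
    · intro U hU V hV
      have hUΓ := ((hchar i U).1 hU).1
      have hUJ := ((hchar i U).1 hU).2
      have hVΓ := ((hchar i V).1 hV).1
      obtain ⟨W, hW, hWmul⟩ := hΓ.mul_closed U hUΓ V hVΓ
      by_cases hz : ∀ u ∈ U, ∀ v ∈ V, mul u v = 0
      · exact ⟨U, hU, fun u hu v hv => by rw [hz u hu v hv]; exact zero_mem _⟩
      · push_neg at hz
        obtain ⟨u, hu, v, hv, hne0⟩ := hz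
        obtain ⟨k, hWk, hWmem⟩ := hhom W hW
        have h1 : mul u v ∈ J i := (mul_memJ hJid i (hUJ hu) v).1
        have h2 : mul u v ∈ J k := hWk (hWmul u hu v hv)
        have hik : i = k := by
          by_contra hik
          exact hne0 (J_disj hindep hik h1 h2)
        subst hik
        exact ⟨W, hWmem, hWmul⟩
  refine ⟨fun i => ⟨hgrad_i i, ?_⟩, hEq.symm⟩
  -- fineness of the induced grading
  intro Δ hΔ hrefΔ
  set Γi : Set (Submodule F B) := (fun U => U ⊓ J i) '' Γ \ {⊥} with hΓidef
  set E : Set (Submodule F B) := Δ ∪ (Γ \ Γi) with hEdef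
  have htotal_i : sSup Γi = J i := (hgrad_i i).total
  have hEgr : IsGradingOn mul ⊤ E := by
    refine ⟨?_, fun S _ => le_top, ?_, ?_, ?_⟩
    · rintro S (hS | hS)
      · exact hΔ.ne_bot S hS
      · exact hΓ.ne_bot S hS.1
    · -- indep
      rintro S (hSΔ | hSΓ)
      · have hsub : E \ {S} ⊆ (Δ \ {S}) ∪ (Γ \ Γi) := by
          rintro T ⟨hT1 | hT1, hT2⟩
          · exact Or.inl ⟨hT1, hT2⟩
          · exact Or.inr hT1
        have hb : sSup (Γ \ Γi) ≤ ⨆ j, ⨆ _ : j ≠ i, J j := by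
          refine sSup_le fun T hT => ?_
          obtain ⟨k, hki, hTk⟩ := hnotin i T hT
          exact le_trans hTk (le_iSup₂ (f := fun j (_ : j ≠ i) => J j) k hki)
        have hle2 : sSup (E \ {S}) ≤ sSup (Δ \ {S}) ⊔ (⨆ j, ⨆ _ : j ≠ i, J j) := by
          refine le_trans (sSup_le_sSup hsub) ?_
          rw [sSup_union]
          exact sup_le_sup le_rfl hb
        exact (modular_disjoint (hΔ.le S hSΔ) (sSup_le fun T hT => hΔ.le T hT.1)
          (hΔ.indep hSΔ) (hindep i)).mono_right hle2
      · have h1 : sSup (E \ {S}) ≤ sSup (Γ \ {S}) := by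
          refine sSup_le fun T hT => ?_
          rcases hT.1 with h | h
          · calc T ≤ sSup Δ := le_sSup h
            _ = J i := hΔ.total
            _ = sSup Γi := htotal_i.symm
            _ ≤ sSup (Γ \ {S}) := sSup_le_sSup
                (fun W hW => ⟨hsubΓ i hW, fun hWS => hSΓ.2 (by
                  have : W = S := hWS
                  rw [← this]; exact hW)⟩)
          · exact le_sSup ⟨h.1, hT.2⟩
        exact (hΓ.indep hSΓ.1).mono_right h1
    · -- total
      have hcup : Γi ∪ (Γ \ Γi) = Γ := Set.union_diff_cancel (hsubΓ i)
      rw [hEdef, sSup_union, hΔ.total, ← htotal_i, ← sSup_union, hcup, hΓ.total]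
    · -- mul_closed
      rintro U (hUΔ | hUΓ) V (hVΔ | hVΓ)
      · obtain ⟨W, hW, hWmul⟩ := hΔ.mul_closed U hUΔ V hVΔ
        exact ⟨W, Or.inl hW, hWmul⟩
      · obtain ⟨k, hki, hVk⟩ := hnotin i V hVΓ
        refine ⟨U, Or.inl hUΔ, fun u hu v hv => ?_⟩
        have h1 : mul u v ∈ J i := (mul_memJ hJid i (hΔ.le U hUΔ hu) v).1
        have h2 : mul u v ∈ J k := (mul_memJ hJid k (hVk hv) u).2
        rw [J_disj hindep (Ne.symm hki) h1 h2]; exact zero_mem _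
      · obtain ⟨k, hki, hUk⟩ := hnotin i U hUΓ
        refine ⟨U, Or.inr hUΓ, fun u hu v hv => ?_⟩
        have h1 : mul u v ∈ J k := (mul_memJ hJid k (hUk hu) v).1
        have h2 : mul u v ∈ J i := (mul_memJ hJid i (hΔ.le V hVΔ hv) u).2
        rw [J_disj hindep hki h1 h2]; exact zero_mem _
      · obtain ⟨k, hki, hUk⟩ := hnotin i U hUΓ
        obtain ⟨W, hW, hWmul⟩ := hΓ.mul_closed U hUΓ.1 V hVΓ.1
        by_cases hz : ∀ u ∈ U, ∀ v ∈ V, mul u v = 0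
        · exact ⟨U, Or.inr hUΓ, fun u hu v hv => by rw [hz u hu v hv]; exact zero_mem _⟩
        · push_neg at hz
          obtain ⟨u, hu, v, hv, hne0⟩ := hz
          refine ⟨W, Or.inr ⟨hW, fun hWi => ?_⟩, hWmul⟩
          have h1 : mul u v ∈ J k := (mul_memJ hJid k (hUk hu) v).1
          have h2 : mul u v ∈ J i := ((hchar i W).1 hWi).2 (hWmul u hu v hv)
          exact hne0 (J_disj hindep hki h1 h2)
  have hErefines : GradRefines E Γ := by
    rintro T (hT | hT)
    · obtain ⟨W, hW, hTW⟩ := hrefΔ T hT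
      exact ⟨W, hsubΓ i hW, hTW⟩
    · exact ⟨T, hT.1, le_rfl⟩
  have hEeq : E = Γ := hmax E hEgr hErefines
  apply Set.Subset.antisymm
  · intro D hD
    have hDΓ : D ∈ Γ := by rw [← hEeq]; exact Or.inl hD
    exact (hchar i D).2 ⟨hDΓ, hΔ.le D hD⟩
  · intro U hU
    have hUE : U ∈ E := by rw [hEeq]; exact hsubΓ i hU
    rcases hUE with h | h
    · exact h
    · exact absurd hU h.2

end Stmt15Part1

section Stmt15Part2
variable {F B : Type*} [Field F] [AddCommGroup B] [Module F B]
variable {mul : B → B → B} {n : ℕ} {J : Fin n → Submodule F B}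

lemma stmt15_part2 (hJid : ∀ i, IsIdealIn mul ⊤ (J i)) (hindep : iSupIndep J)
    (hsup : (⨆ i, J i) = ⊤) (Γs : Fin n → Set (Submodule F B))
    (hfs : ∀ i, IsFineGradingOn mul (J i) (Γs i)) :
    IsFineGradingOn mul ⊤ (⋃ i, Γs i) := by
  classical
  have hgr := fun i => (hfs i).1
  have hleJ : ∀ i, ∀ U ∈ Γs i, U ≤ J i := fun i U hU => (hgr i).le U hU
  constructor
  · refine ⟨?_, fun U _ => le_top, ?_, ?_, ?_⟩
    · intro U hU
      obtain ⟨i, hi⟩ := Set.mem_iUnion.1 hU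
      exact (hgr i).ne_bot U hi
    · -- indep
      intro S hS
      obtain ⟨i, hSi⟩ := Set.mem_iUnion.1 hS
      have hle2 : sSup ((⋃ j, Γs j) \ {S}) ≤ sSup (Γs i \ {S}) ⊔ (⨆ j, ⨆ _ : j ≠ i, J j) := by
        refine sSup_le fun T hT => ?_
        obtain ⟨k, hk⟩ := Set.mem_iUnion.1 hT.1
        by_cases hki : k = i
        · subst hki
          exact le_trans (le_sSup (⟨hk, hT.2⟩ : T ∈ Γs k \ {S})) le_sup_left
        · exact le_trans (le_trans (hleJ k T hk)
            (le_iSup₂ (f := fun j (_ : j ≠ i) => J j) k hki)) le_sup_right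
      exact (modular_disjoint (hleJ i S hSi) (sSup_le fun T hT => hleJ i T hT.1)
        ((hgr i).indep hSi) (hindep i)).mono_right hle2
    · -- total
      calc sSup (⋃ i, Γs i) = ⨆ i, sSup (Γs i) := sSup_iUnion _
      _ = ⨆ i, J i := iSup_congr fun i => (hgr i).total
      _ = ⊤ := hsup
    · -- mul_closed
      intro U hU V hV
      obtain ⟨i, hUi⟩ := Set.mem_iUnion.1 hU
      obtain ⟨j, hVj⟩ := Set.mem_iUnion.1 hV
      by_cases hij : i = j
      · subst hij
        obtain ⟨W, hW, hWmul⟩ := (hgr i).mul_closed U hUi V hVj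
        exact ⟨W, Set.mem_iUnion.2 ⟨i, hW⟩, hWmul⟩
      · refine ⟨U, hU, fun u hu v hv => ?_⟩
        have h1 : mul u v ∈ J i := (mul_memJ hJid i (hleJ i U hUi hu) v).1
        have h2 : mul u v ∈ J j := (mul_memJ hJid j (hleJ j V hVj hv) u).2
        rw [J_disj hindep hij h1 h2]; exact zero_mem _
  · intro Γ'' hΓ'' href
    have hhom : ∀ S ∈ Γ'', ∃ k, S ≤ J k := by
      intro S hS
      obtain ⟨W, hW, hSW⟩ := href S hS
      obtain ⟨k, hk⟩ := Set.mem_iUnion.1 hW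
      exact ⟨k, hSW.trans (hleJ k W hk)⟩
    set Δ : Fin n → Set (Submodule F B) := fun i => {S | S ∈ Γ'' ∧ S ≤ J i} with hΔdef
    have hΔgr : ∀ i, IsGradingOn mul (J i) (Δ i) := by
      intro i
      refine ⟨fun S hS => hΓ''.ne_bot S hS.1, fun S hS => hS.2,
        hΓ''.indep.mono (fun S hS => hS.1), ?_, ?_⟩
      · apply le_antisymm (sSup_le fun S hS => hS.2)
        have ha : sSup (Δ i) ≤ J i := sSup_le fun S hS => hS.2
        have htop : (⊤ : Submodule F B) ≤ sSup (Δ i) ⊔ (⨆ j, ⨆ _ : j ≠ i, J j) := by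
          rw [← hΓ''.total]
          refine sSup_le fun S hS => ?_
          obtain ⟨k, hk⟩ := hhom S hS
          by_cases hki : k = i
          · subst hki
            exact le_trans (le_sSup (⟨hS, hk⟩ : S ∈ Δ k)) le_sup_left
          · exact le_trans (le_trans hk
              (le_iSup₂ (f := fun j (_ : j ≠ i) => J j) k hki)) le_sup_right
        calc J i = J i ⊓ ⊤ := (inf_top_eq _).symm
        _ ≤ J i ⊓ (sSup (Δ i) ⊔ (⨆ j, ⨆ _ : j ≠ i, J j)) := inf_le_inf_left _ htop
        _ = sSup (Δ i) := modular_inf_eq ha (hindep i)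
      · intro U hU V hV
        obtain ⟨W, hW, hWmul⟩ := hΓ''.mul_closed U hU.1 V hV.1
        by_cases hz : ∀ u ∈ U, ∀ v ∈ V, mul u v = 0
        · exact ⟨U, hU, fun u hu v hv => by rw [hz u hu v hv]; exact zero_mem _⟩
        · push_neg at hz
          obtain ⟨u, hu, v, hv, hne0⟩ := hz
          obtain ⟨k, hWk⟩ := hhom W hW
          have h1 : mul u v ∈ J i := (mul_memJ hJid i (hU.2 hu) v).1
          have h2 : mul u v ∈ J k := hWk (hWmul u hu v hv)
          have hik : i = k := by
            by_contra hik
            exact hne0 (J_disj hindep hik h1 h2)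
          subst hik
          exact ⟨W, ⟨hW, hWk⟩, hWmul⟩
    have hΔref : ∀ i, GradRefines (Δ i) (Γs i) := by
      intro i S hS
      obtain ⟨W, hW, hSW⟩ := href S hS.1
      obtain ⟨k, hk⟩ := Set.mem_iUnion.1 hW
      have hik : i = k := J_le_uniq hindep (hΓ''.ne_bot S hS.1) hS.2
        (hSW.trans (hleJ k W hk))
      exact ⟨W, by rw [hik]; exact hk, hSW⟩
    have hΔeq : ∀ i, Δ i = Γs i := fun i => (hfs i).2 (Δ i) (hΔgr i) (hΔref i)
    apply Set.Subset.antisymm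
    · intro S hS
      obtain ⟨k, hk⟩ := hhom S hS
      have hmem : S ∈ Δ k := ⟨hS, hk⟩
      rw [hΔeq k] at hmem
      exact Set.mem_iUnion.2 ⟨k, hmem⟩
    · intro U hU
      obtain ⟨i, hi⟩ := Set.mem_iUnion.1 hU
      rw [← hΔeq i] at hi
      exact hi.1

end Stmt15Part2

/-- if a fine grading `Γ` on `B = B¹ ⊕ ⋯ ⊕ Bⁿ` (graded ideals) is given, then the
induced gradings on the `Bⁱ` are fine and `Γ` is the union of the induced gradings (i.e. `Γ` is
the product grading); conversely the union of fine gradings of the `Bⁱ` is a fine grading. -/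
theorem stmt_15 {F B : Type*} [Field F] [AddCommGroup B] [Module F B]
    (mul : B → B → B) {n : ℕ} (J : Fin n → Submodule F B)
    (hJid : ∀ i, IsIdealIn mul ⊤ (J i)) (hindep : iSupIndep J)
    (hsup : (⨆ i, J i) = ⊤) :
    (∀ Γ : Set (Submodule F B), IsFineGradingOn mul ⊤ Γ →
      (∀ i, (⨆ U ∈ Γ, U ⊓ J i) = J i) →
      (∀ i, IsFineGradingOn mul (J i) ((fun U => U ⊓ J i) '' Γ \ {⊥})) ∧
      Γ = ⋃ i, ((fun U => U ⊓ J i) '' Γ \ {⊥})) ∧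
    (∀ Γs : Fin n → Set (Submodule F B),
      (∀ i, IsFineGradingOn mul (J i) (Γs i)) →
      IsFineGradingOn mul ⊤ (⋃ i, Γs i)) := by
  exact ⟨fun Γ hfine hgr => stmt15_part1 hJid hindep hsup Γ hfine hgr,
    fun Γs hfs => stmt15_part2 hJid hindep hsup Γs hfs⟩
end
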